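/- Let S be a finite quantum stop time and let V be an isometric p-adapted cocycle which is strongly continuous. Then the limit V_S = V_{S,∞} := lim_{t→∞} V_{S,t} exists in the strong operator topology on h ⊗ F. -/

import Mathlib

/- ------------------------------------------------------------------
Common framework: an abstract axiomatisation of Boson Fock space
`𝓕 = Γ(L²([0,∞); k))` over `H = L²([0,∞); k)`, quantum stop times,
stop-time integrals (as limits of Riemann sums over the net of finite
partitions of `[0, t] ⊆ [0, ∞]` ordered by refinement), the CCR flow,
and operator cocycles, following Belton–Sinha,
"Stopping the CCR flow and its isometric cocycles".
------------------------------------------------------------------ -/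

open Filter MeasureTheory Topology
open scoped ENNReal

noncomputable section

local notation "⟪" x ", " y "⟫" => @inner ℂ _ _ x y

/-- A finite partition `{0 = π₀ < π₁ < ⋯ < π_{n+1} = t}` of `[0, t] ⊆ [0, ∞]`,
encoded as a finite set of points of `[0, ∞]` containing `0` and `t` and
contained in `[0, t]`. -/
structure TPartition (t : ℝ≥0∞) where
  pts : Finset ℝ≥0∞
  zero_mem : 0 ∈ pts
  top_mem : t ∈ pts
  mem_le : ∀ s ∈ pts, s ≤ t

namespace TPartition

variable {t : ℝ≥0∞}

/-- Partitions are (pre)ordered by refinement: `π ≤ π'` iff `π'` refines `π`. -/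
instance : Preorder (TPartition t) where
  le π π' := π.pts ⊆ π'.pts
  le_refl _ := Finset.Subset.refl _
  le_trans _ _ _ h h' := Finset.Subset.trans h h'

/-- The predecessor of `s` in the partition `π`: the largest partition point
strictly less than `s` (and `0` if there is none). -/
def pred (π : TPartition t) (s : ℝ≥0∞) : ℝ≥0∞ :=
  (π.pts.filter fun u => u < s).sup id

end TPartition

variable {H 𝓕 : Type*}
  [NormedAddCommGroup H] [InnerProductSpace ℂ H] [CompleteSpace H]
  [NormedAddCommGroup 𝓕] [InnerProductSpace ℂ 𝓕] [CompleteSpace 𝓕]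

/-- An abstract presentation of Boson Fock space `𝓕 ≅ Γ(H)` over
`H = L²([0,∞); k)`, together with the structure maps needed here:
exponential vectors, truncation `f ↦ f·1_{[0,t)}`, the right shifts `θ_t`
and their adjoints, second quantisations `Γ_t` (with `Γ_∞` the projection
onto `ℂε(0)`, i.e. the second quantisation of `θ_∞ = 0`), and for each
`f ∈ H`, `s ∈ [0,∞]` the "past insertion" operator
`past f s = |ε(f1_{[0,s)})⟩⟨ε(0)| ⊗ I_{[s}` on `𝓕 ≅ 𝓕_{s)} ⊗ 𝓕_{[s}`, which
maps a future-adapted vector `ε(0|_{[0,s)}) ⊗ x` to `ε(f|_{[0,s)}) ⊗ x`. -/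
structure FockSpec (H 𝓕 : Type*) [NormedAddCommGroup H] [InnerProductSpace ℂ H]
    [CompleteSpace H] [NormedAddCommGroup 𝓕] [InnerProductSpace ℂ 𝓕] [CompleteSpace 𝓕] where
  /-- the exponential vectors -/
  eV : H → 𝓕
  inner_eV : ∀ f g : H, ⟪eV f, eV g⟫ = Complex.exp ⟪f, g⟫
  dense_eV : Dense (Submodule.span ℂ (Set.range eV) : Set 𝓕)
  /-- `cut t` is multiplication by the indicator of `[0, t)`, `f ↦ f|_{[0,t)}` -/
  cut : ℝ≥0∞ → H →L[ℂ] H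
  cut_zero : cut 0 = 0
  cut_top : cut ⊤ = ContinuousLinearMap.id ℂ H
  cut_sa : ∀ (t : ℝ≥0∞) (f g : H), ⟪cut t f, g⟫ = ⟪f, cut t g⟫
  cut_min : ∀ (s u : ℝ≥0∞) (f : H), cut s (cut u f) = cut (min s u) f
  /-- the isometric right shift `θ_t`, with `θ_∞ = 0` -/
  shift : ℝ≥0∞ → H →L[ℂ] H
  shift_top : shift ⊤ = 0
  shift_inner : ∀ t : ℝ≥0∞, t ≠ ⊤ → ∀ f g : H, ⟪shift t f, shift t g⟫ = ⟪f, g⟫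
  shift_add : ∀ (s u : ℝ≥0∞) (f : H), shift s (shift u f) = shift (s + u) f
  cut_shift : ∀ (t : ℝ≥0∞) (f : H), cut t (shift t f) = 0
  /-- `shiftL t = θ_t^*`, i.e. `f ↦ f(· + t)` -/
  shiftL : ℝ≥0∞ → H →L[ℂ] H
  shiftL_adj : ∀ (t : ℝ≥0∞) (f g : H), ⟪shift t f, g⟫ = ⟪f, shiftL t g⟫
  /-- the second quantisation `Γ_t : ε(f) ↦ ε(θ_t f)`;  `Γ_∞` is the orthogonal
  projection onto `ℂ ε(0)` -/
  Gam : ℝ≥0∞ → 𝓕 →L[ℂ] 𝓕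
  Gam_eV : ∀ (t : ℝ≥0∞) (f : H), Gam t (eV f) = eV (shift t f)
  /-- `GamL t = Γ_t^*` -/
  GamL : ℝ≥0∞ → 𝓕 →L[ℂ] 𝓕
  GamL_eV : ∀ t : ℝ≥0∞, t ≠ ⊤ → ∀ f : H, GamL t (eV f) = eV (shiftL t f)
  GamL_adj : ∀ (t : ℝ≥0∞) (x y : 𝓕), ⟪Gam t x, y⟫ = ⟪x, GamL t y⟫
  /-- past insertion: on `𝓕 ≅ 𝓕_{s)} ⊗ 𝓕_{[s}`,
  `past f s = |ε(f|_{[0,s)})⟩⟨ε(0|_{[0,s)})| ⊗ I_{[s}`; it maps `ε(0|_{[0,s)}) ⊗ x`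
  to `ε(f|_{[0,s)}) ⊗ x` -/
  past : H → ℝ≥0∞ → 𝓕 →L[ℂ] 𝓕
  past_eV : ∀ (f : H) (s : ℝ≥0∞) (g : H), past f s (eV g) = eV (cut s f + g - cut s g)
  /-- `projE t = E_t`, the second quantisation of `cut t`: the orthogonal projection
  onto `𝓕_{t)} ⊗ ε(0|_{[t,∞)})` -/
  projE : ℝ≥0∞ → 𝓕 →L[ℂ] 𝓕
  projE_eV : ∀ (t : ℝ≥0∞) (f : H), projE t (eV f) = eV (cut t f)

namespace FockSpec

variable (E : FockSpec H 𝓕)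

/-- `X ∈ B(𝓕_{t)}) ⊗ I_{[t}`, expressed through the factorisation of matrix
elements between exponential vectors. -/
def AdaptedAt (X : 𝓕 →L[ℂ] 𝓕) (t : ℝ≥0∞) : Prop :=
  ∀ f g : H, ⟪E.eV f, X (E.eV g)⟫ =
    ⟪E.eV (E.cut t f), X (E.eV (E.cut t g))⟫ * Complex.exp ⟪f - E.cut t f, g - E.cut t g⟫

/-- `F : [0, t] → 𝓕` is future adapted: `F(s) = ε(0|_{[0,s)}) ⊗ F_s ∈
ε(0|_{[0,s)}) ⊗ 𝓕_{[s}` for all `s ∈ (0, t]` (the value at `s = ∞`, when `t = ∞`,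
being fixed by the same requirement). -/
def FutureAdapted (t : ℝ≥0∞) (F : ℝ≥0∞ → 𝓕) : Prop :=
  ∀ s : ℝ≥0∞, 0 < s → s ≤ t → E.past 0 s (F s) = F s

end FockSpec

/-- `F` is bounded on `[0, t]`. -/
def BddOn {𝓕 : Type*} [NormedAddCommGroup 𝓕] (t : ℝ≥0∞) (F : ℝ≥0∞ → 𝓕) : Prop :=
  ∃ C : ℝ, ∀ s ≤ t, ‖F s‖ ≤ C

/-- A quantum stop time: a spectral measure on the Borel sets of `[0, ∞]`,
with values orthogonal projections on `𝓕`, which is identity adapted; we impose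
throughout (as in the paper) that `S({0}) = 0`. -/
structure QST (E : FockSpec H 𝓕) where
  meas : Set ℝ≥0∞ → 𝓕 →L[ℂ] 𝓕
  sa : ∀ A : Set ℝ≥0∞, IsSelfAdjoint (meas A)
  idem : ∀ A : Set ℝ≥0∞, meas A ∘L meas A = meas A
  /-- condition (ii): `A ↦ ⟨x, S(A) y⟩` is a complex measure -/
  cm : 𝓕 → 𝓕 → MeasureTheory.ComplexMeasure ℝ≥0∞
  cm_apply : ∀ (x y : 𝓕) (A : Set ℝ≥0∞), MeasurableSet A → cm x y A = ⟪x, meas A y⟫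
  total : meas Set.univ = 1
  adapted : ∀ t : ℝ≥0∞, t ≠ ⊤ → E.AdaptedAt (meas {s | s ≤ t}) t
  zero : meas {0} = 0

namespace QST

variable {E : FockSpec H 𝓕}

/-- A quantum stop time is finite when `S({∞}) = 0`. -/
def Finite (S : QST E) : Prop := S.meas {⊤} = 0

/-- The Riemann sum `Σ_{j=1}^{n+1} S((π_{j-1}, π_j]) v(π_j)` associated with a
partition `π` of `[0, t]` and an integrand `v`. -/
def sum (S : QST E) {t : ℝ≥0∞} (v : ℝ≥0∞ → 𝓕) (π : TPartition t) : 𝓕 :=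
  ∑ s ∈ π.pts.erase 0, S.meas (Set.Ioc (π.pred s) s) (v s)

end QST

variable {E : FockSpec H 𝓕}

/-- The integral of a complex function against a complex measure, via the Jordan
decompositions of its real and imaginary parts. -/
def cintegral (μ : MeasureTheory.ComplexMeasure ℝ≥0∞) (φ : ℝ≥0∞ → ℂ) : ℂ :=
  ((∫ s, φ s ∂(MeasureTheory.ComplexMeasure.re μ).toJordanDecomposition.posPart) -
      ∫ s, φ s ∂(MeasureTheory.ComplexMeasure.re μ).toJordanDecomposition.negPart) +
    Complex.I * ((∫ s, φ s ∂(MeasureTheory.ComplexMeasure.im μ).toJordanDecomposition.posPart) -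
      ∫ s, φ s ∂(MeasureTheory.ComplexMeasure.im μ).toJordanDecomposition.negPart)

/-- `∫_{[0,t]} φ(s) S^{f,g}(ds)`, where `S^{f,g}` is the finite Borel measure on
`[0, ∞]` with `S^{f,g}(A) = ∫_A exp(-∫_s^∞ ⟨f(r), g(r)⟩ dr) ⟨ε(f), S(ds) ε(g)⟩`;
here `∫_s^∞ ⟨f(r), g(r)⟩ dr = ⟪f - f|_{[0,s)}, g - g|_{[0,s)}⟫`. -/
def QST.sfgIntegral (S : QST E) (f g : H) (t : ℝ≥0∞) (φ : ℝ≥0∞ → ℂ) : ℂ :=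
  cintegral (S.cm (E.eV f) (E.eV g))
    (Set.indicator {s | s ≤ t}
      fun s => φ s * Complex.exp (-⟪f - E.cut s f, g - E.cut s g⟫))

/-- `ESt` is the family `(E_{S,t})_{t ∈ (0,∞]}` of time projections of `S`:
each `E_{S,t}` is an orthogonal projection and
`E_{S,t} ε(f) = ∫_{[0,t]} S(ds) ε(f|_{[0,s)}) ⊗ ε(0|_{[s,∞)})`. -/
def IsTimeProj (S : QST E) (ESt : ℝ≥0∞ → 𝓕 →L[ℂ] 𝓕) : Prop :=
  ∀ t : ℝ≥0∞, 0 < t →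
    IsSelfAdjoint (ESt t) ∧ ESt t ∘L ESt t = ESt t ∧
      ∀ f : H,
        Tendsto (fun π : TPartition t => S.sum (fun s => E.past f s (E.eV 0)) π) atTop
          (𝓝 (ESt t (E.eV f)))

/-- `ΓS` is the stopped right shift of `S`:
`Γ_S x = ∫_{[0,∞]} S(ds) ε(0|_{[0,s)}) ⊗ Γ_s x`. -/
def IsStoppedShift (S : QST E) (ΓS : 𝓕 →L[ℂ] 𝓕) : Prop :=
  ∀ x : 𝓕, Tendsto (fun π : TPartition ⊤ => S.sum (fun s => E.Gam s x) π) atTop (𝓝 (ΓS x))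

/-- `j` encodes the isometric isomorphism `j_S : 𝓕_{S)} ⊗ 𝓕_{[S} → 𝓕` of the
abstract strong Markov property, as a bilinear map on `𝓕 × 𝓕` (precomposed with
`E_S = E_{S,∞}` and `Γ_S` in the two arguments): it satisfies
`j_S(E_{S,t} ε(f) ⊗ Γ_S x) = ∫_{[0,t]} S(ds) ε(f|_{[0,s)}) ⊗ Γ_s x`, is isometric
for the tensor inner product, and has dense (hence, being isometric, full) range. -/
def IsJS (S : QST E) (ESt : ℝ≥0∞ → 𝓕 →L[ℂ] 𝓕) (ΓS : 𝓕 →L[ℂ] 𝓕)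
    (j : 𝓕 →ₗ[ℂ] 𝓕 →ₗ[ℂ] 𝓕) : Prop :=
  (∀ t : ℝ≥0∞, 0 < t → ∀ (f : H) (x : 𝓕),
      Tendsto (fun π : TPartition t => S.sum (fun s => E.past f s (E.Gam s x)) π) atTop
        (𝓝 (j (ESt t (E.eV f)) (ΓS x)))) ∧
    (∀ a b x y : 𝓕,
      ⟪j (ESt ⊤ a) (ΓS x), j (ESt ⊤ b) (ΓS y)⟫ = ⟪ESt ⊤ a, ESt ⊤ b⟫ * ⟪ΓS x, ΓS y⟫) ∧
    Dense (Submodule.span ℂ {z : 𝓕 | ∃ a x : 𝓕, z = j (ESt ⊤ a) (ΓS x)} : Set 𝓕)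

/-- A spectral measure on the Borel sets of `[0, ∞]²`. -/
def IsSpectralProd (P : Set (ℝ≥0∞ × ℝ≥0∞) → 𝓕 →L[ℂ] 𝓕) : Prop :=
  (∀ A, IsSelfAdjoint (P A)) ∧ (∀ A, P A ∘L P A = P A) ∧ P Set.univ = 1 ∧
    ∀ A : ℕ → Set (ℝ≥0∞ × ℝ≥0∞), (∀ n, MeasurableSet (A n)) →
      Pairwise (Function.onFun Disjoint A) → ∀ x y : 𝓕,
        HasSum (fun n => ⟪x, P (A n) y⟫) ⟪x, P (⋃ n, A n) y⟫

/-- `P` is the product spectral measure `S ⊗ T` on `[0, ∞]²`, determined on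
rectangles by `(S ⊗ T)(A × B) = j_S (S(A) ⊗ Γ_S T(B) Γ_S^*) j_S^*`. -/
def IsProdOf (S T : QST E) (ESt : ℝ≥0∞ → 𝓕 →L[ℂ] 𝓕) (ΓS : 𝓕 →L[ℂ] 𝓕)
    (jS : 𝓕 →ₗ[ℂ] 𝓕 →ₗ[ℂ] 𝓕) (P : Set (ℝ≥0∞ × ℝ≥0∞) → 𝓕 →L[ℂ] 𝓕) : Prop :=
  IsSpectralProd P ∧
    ∀ A B : Set ℝ≥0∞, MeasurableSet A → MeasurableSet B → ∀ a y : 𝓕,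
      P (A ×ˢ B) (jS (ESt ⊤ a) (ΓS y)) = jS (S.meas A (ESt ⊤ a)) (ΓS (T.meas B y))

/-- `ST` is the convolution `S ⋆ T`:
`(S ⋆ T)(C) = (S ⊗ T)({(s, u) : s + u ∈ C})`. -/
def IsConvOf (S T : QST E) (ESt : ℝ≥0∞ → 𝓕 →L[ℂ] 𝓕) (ΓS : 𝓕 →L[ℂ] 𝓕)
    (jS : 𝓕 →ₗ[ℂ] 𝓕 →ₗ[ℂ] 𝓕) (ST : QST E) : Prop :=
  ∃ P : Set (ℝ≥0∞ × ℝ≥0∞) → 𝓕 →L[ℂ] 𝓕, IsProdOf S T ESt ΓS jS P ∧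
    ∀ C : Set ℝ≥0∞, MeasurableSet C → ST.meas C = P {p | p.1 + p.2 ∈ C}

/-- A Borel measurable, bounded, future-adapted integrand on `[0, t]`. -/
def MeasIntegrand [MeasurableSpace 𝓕] (E : FockSpec H 𝓕) (t : ℝ≥0∞)
    (F : ℝ≥0∞ → 𝓕) : Prop :=
  Measurable F ∧ BddOn t F ∧ E.FutureAdapted t F

/-- `Int` is a stop-time integral for `S`: `Int t f F` plays the role of
`∫_{[0,t]} S(ds) ε(f|_{[0,s)}) ⊗ F_s` for Borel measurable, bounded,
future-adapted `F`, satisfying the inner-product and projection identities and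
extending the Riemann-sum limit for continuous integrands. -/
def IsStopIntegral [MeasurableSpace 𝓕] (E : FockSpec H 𝓕) (S : QST E)
    (Int : ℝ≥0∞ → H → (ℝ≥0∞ → 𝓕) → 𝓕) : Prop :=
  (∀ (t : ℝ≥0∞) (f g : H) (F G : ℝ≥0∞ → 𝓕), MeasIntegrand E t F → MeasIntegrand E t G →
      ⟪Int t f F, Int t g G⟫ = S.sfgIntegral f g t fun s => ⟪F s, G s⟫) ∧
    (∀ (t : ℝ≥0∞) (f : H) (F : ℝ≥0∞ → 𝓕), MeasIntegrand E t F → ∀ r : ℝ≥0∞, 0 < r →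
      S.meas {s | s ≤ r} (Int t f F) = Int (min r t) f F) ∧
    (∀ (t : ℝ≥0∞) (f : H) (F : ℝ≥0∞ → 𝓕), MeasIntegrand E t F →
      ContinuousOn F {s | s ≤ t} →
        Tendsto (fun π : TPartition t => S.sum (fun s => E.past f s (F s)) π) atTop
          (𝓝 (Int t f F)))

/-- `σ` is the CCR flow: `σ_t(X) = I_{t)} ⊗ Γ_t X Γ_t^*` for `t ∈ [0, ∞)`
(expressed through matrix elements between exponential vectors), and `σ_∞ ≡ I`. -/
def IsCCRFlow (E : FockSpec H 𝓕) (σ : ℝ≥0∞ → (𝓕 →L[ℂ] 𝓕) → 𝓕 →L[ℂ] 𝓕) : Prop :=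
  (∀ s : ℝ≥0∞, s ≠ ⊤ → ∀ (X : 𝓕 →L[ℂ] 𝓕) (f g : H),
      ⟪E.eV f, σ s X (E.eV g)⟫ =
        Complex.exp ⟪E.cut s f, E.cut s g⟫ *
          ⟪E.eV (E.shiftL s f), X (E.eV (E.shiftL s g))⟫) ∧
    ∀ X : 𝓕 →L[ℂ] 𝓕, σ ⊤ X = 1

/-- The Riemann sum `σ_{S,π}(X) = Σ_{j=1}^{n+1} σ_{π_j}(X) S((π_{j-1}, π_j])`. -/
def QST.flowSum (S : QST E) (σ : ℝ≥0∞ → (𝓕 →L[ℂ] 𝓕) → 𝓕 →L[ℂ] 𝓕)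
    (X : 𝓕 →L[ℂ] 𝓕) (π : TPartition (⊤ : ℝ≥0∞)) : 𝓕 →L[ℂ] 𝓕 :=
  ∑ s ∈ π.pts.erase 0, σ s X ∘L S.meas (Set.Ioc (π.pred s) s)

/-- `σS` is the stopped CCR flow `σ_S`: for every `X`, `σ_S(X)` is the limit of
`σ_{S,π}(X)` in the strong operator topology as `π` is refined. -/
def IsStoppedFlow (S : QST E) (σ : ℝ≥0∞ → (𝓕 →L[ℂ] 𝓕) → 𝓕 →L[ℂ] 𝓕)
    (σS : (𝓕 →L[ℂ] 𝓕) → 𝓕 →L[ℂ] 𝓕) : Prop :=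
  ∀ (X : 𝓕 →L[ℂ] 𝓕) (x : 𝓕),
    Tendsto (fun π : TPartition ⊤ => S.flowSum σ X π x) atTop (𝓝 (σS X x))

variable {h 𝓚 : Type*}
  [NormedAddCommGroup h] [InnerProductSpace ℂ h] [CompleteSpace h]
  [NormedAddCommGroup 𝓚] [InnerProductSpace ℂ 𝓚] [CompleteSpace 𝓚]

/-- An abstract presentation of the Hilbert-space tensor product `𝓚 = h ⊗ 𝓕` of
the initial space `h` and Fock space `𝓕`, with the ampliations
`X ↦ I_h ⊗ X` of `B(𝓕)` and `B ↦ B ⊗ I_𝓕` of `B(h)`. -/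
structure AmpSpec (𝓕 h 𝓚 : Type*) [NormedAddCommGroup 𝓕] [InnerProductSpace ℂ 𝓕]
    [CompleteSpace 𝓕] [NormedAddCommGroup h] [InnerProductSpace ℂ h] [CompleteSpace h]
    [NormedAddCommGroup 𝓚] [InnerProductSpace ℂ 𝓚] [CompleteSpace 𝓚] where
  tens : h →ₗ[ℂ] 𝓕 →ₗ[ℂ] 𝓚
  inner_tens : ∀ (u v : h) (x y : 𝓕), ⟪tens u x, tens v y⟫ = ⟪u, v⟫ * ⟪x, y⟫
  dense_tens : Dense (Submodule.span ℂ {z : 𝓚 | ∃ u x, z = tens u x} : Set 𝓚)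
  amp : (𝓕 →L[ℂ] 𝓕) → 𝓚 →L[ℂ] 𝓚
  amp_tens : ∀ (X : 𝓕 →L[ℂ] 𝓕) (u : h) (x : 𝓕), amp X (tens u x) = tens u (X x)
  ampH : (h →L[ℂ] h) → 𝓚 →L[ℂ] 𝓚
  ampH_tens : ∀ (B : h →L[ℂ] h) (u : h) (x : 𝓕), ampH B (tens u x) = tens (B u) x

/-- `X ∈ M ⊗̄ B(𝓕)` for the von Neumann algebra `M ⊆ B(h)`: `X` commutes with
`B ⊗ I_𝓕` for every `B` in the commutant of `M`. -/
def InVNTensor (A : AmpSpec 𝓕 h 𝓚) (M : Set (h →L[ℂ] h)) (X : 𝓚 →L[ℂ] 𝓚) : Prop :=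
  ∀ B : h →L[ℂ] h, (∀ Y ∈ M, B ∘L Y = Y ∘L B) → X ∘L A.ampH B = A.ampH B ∘L X

/-- `V` is a `p`-adapted process: `V_t = V_{t)} ⊗ P_{[t}`, where `P_{[t}` is the
second quantisation of the pointwise action `pH` of the projection `p` on
`L²([t,∞); k)`; expressed through matrix elements between exponential vectors. -/
def PAdapted (E : FockSpec H 𝓕) (A : AmpSpec 𝓕 h 𝓚) (pH : H →L[ℂ] H)
    (V : ℝ≥0∞ → 𝓚 →L[ℂ] 𝓚) : Prop :=
  ∀ t : ℝ≥0∞, t ≠ ⊤ → ∀ (u v : h) (f g : H),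
    ⟪A.tens u (E.eV f), V t (A.tens v (E.eV g))⟫ =
      ⟪A.tens u (E.eV (E.cut t f)), V t (A.tens v (E.eV (E.cut t g)))⟫ *
        Complex.exp ⟪f - E.cut t f, pH (g - E.cut t g)⟫

/-- `Vhat` is the identity-adapted projection `V̂` of the `p`-adapted process `V`:
`V̂_t = V_{t)} ⊗ I_{[t}`. -/
def IsHatOf (E : FockSpec H 𝓕) (A : AmpSpec 𝓕 h 𝓚)
    (V Vhat : ℝ≥0∞ → 𝓚 →L[ℂ] 𝓚) : Prop :=
  ∀ t : ℝ≥0∞, t ≠ ⊤ → ∀ (u v : h) (f g : H),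
    ⟪A.tens u (E.eV f), Vhat t (A.tens v (E.eV g))⟫ =
      ⟪A.tens u (E.eV (E.cut t f)), V t (A.tens v (E.eV (E.cut t g)))⟫ *
        Complex.exp ⟪f - E.cut t f, g - E.cut t g⟫

/-- The process is isometric: `V_{t)}^* V_{t)} = I`, i.e. `V̂_t` is isometric. -/
def IsometricHat (Vhat : ℝ≥0∞ → 𝓚 →L[ℂ] 𝓚) : Prop :=
  ∀ t : ℝ≥0∞, t ≠ ⊤ → ∀ z : 𝓚, ‖Vhat t z‖ = ‖z‖

/-- `Sig` is the CCR flow extended by ampliation to `B(h ⊗ 𝓕)`. -/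
def IsAmpCCRFlow (E : FockSpec H 𝓕) (A : AmpSpec 𝓕 h 𝓚)
    (Sig : ℝ≥0∞ → (𝓚 →L[ℂ] 𝓚) → 𝓚 →L[ℂ] 𝓚) : Prop :=
  ∀ s : ℝ≥0∞, s ≠ ⊤ → ∀ (X : 𝓚 →L[ℂ] 𝓚) (u v : h) (f g : H),
    ⟪A.tens u (E.eV f), Sig s X (A.tens v (E.eV g))⟫ =
      Complex.exp ⟪E.cut s f, E.cut s g⟫ *
        ⟪A.tens u (E.eV (E.shiftL s f)), X (A.tens v (E.eV (E.shiftL s g)))⟫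

/-- The (left operator Markovian) cocycle identity `V_{s+t} = V̂_s σ_s(V_t)`. -/
def IsLeftCocycle (Sig : ℝ≥0∞ → (𝓚 →L[ℂ] 𝓚) → 𝓚 →L[ℂ] 𝓚)
    (V Vhat : ℝ≥0∞ → 𝓚 →L[ℂ] 𝓚) : Prop :=
  ∀ s t : ℝ≥0∞, s ≠ ⊤ → t ≠ ⊤ → V (s + t) = Vhat s ∘L Sig s (V t)

/-- Strong continuity of the process on `[0, ∞)`. -/
def StrongContOn (V : ℝ≥0∞ → 𝓚 →L[ℂ] 𝓚) : Prop :=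
  ∀ z : 𝓚, ContinuousOn (fun t => V t z) {t : ℝ≥0∞ | t ≠ ⊤}

/-- The Riemann sum `V_{S,π} = Σ_{j=1}^{n+1} V_{π_j} S((π_{j-1}, π_j])`, with the
stop time `S` extended by ampliation to `h ⊗ 𝓕`. -/
def VSum {E : FockSpec H 𝓕} (A : AmpSpec 𝓕 h 𝓚) (S : QST E) {t : ℝ≥0∞}
    (V : ℝ≥0∞ → 𝓚 →L[ℂ] 𝓚) (π : TPartition t) : 𝓚 →L[ℂ] 𝓚 :=
  ∑ s ∈ π.pts.erase 0, V s ∘L A.amp (S.meas (Set.Ioc (π.pred s) s))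


/-! ### Auxiliary lemmas -/

section Aux

variable {F : Type*} [NormedAddCommGroup F] [InnerProductSpace ℂ F] [CompleteSpace F]

/-- A self-adjoint idempotent is a contraction. -/
lemma aux_contraction {T : F →L[ℂ] F} (hsa : ContinuousLinearMap.adjoint T = T)
    (hidem : T ∘L T = T) (z : F) : ‖T z‖ ≤ ‖z‖ := by
  have h1 : ⟪T z, T z⟫ = ⟪z, T z⟫ := by
    have e1 : T (T z) = T z := DFunLike.congr_fun hidem z
    calc ⟪T z, T z⟫ = ⟪(ContinuousLinearMap.adjoint T) z, T z⟫ := by rw [hsa]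
      _ = ⟪z, T (T z)⟫ := ContinuousLinearMap.adjoint_inner_left T (T z) z
      _ = ⟪z, T z⟫ := by rw [e1]
  have h2 : (‖T z‖ : ℝ) ^ 2 = RCLike.re ⟪z, T z⟫ := by
    rw [← h1, @inner_self_eq_norm_sq ℂ]
  have h3 : RCLike.re ⟪z, T z⟫ ≤ ‖(⟪z, T z⟫ : ℂ)‖ := RCLike.re_le_norm _
  have h4 : ‖(⟪z, T z⟫ : ℂ)‖ ≤ ‖z‖ * ‖T z‖ := norm_inner_le_norm _ _
  nlinarith [norm_nonneg (T z), norm_nonneg z]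

/-- Norm squared of a sum of pairwise orthogonal vectors. -/
lemma aux_norm_sum_sq {ι : Type*} (J : Finset ι) (a : ι → F)
    (h : ∀ s ∈ J, ∀ t ∈ J, s ≠ t → ⟪a s, a t⟫ = 0) :
    ‖∑ s ∈ J, a s‖ ^ 2 = ∑ s ∈ J, ‖a s‖ ^ 2 := by
  have h1 : ⟪∑ s ∈ J, a s, ∑ t ∈ J, a t⟫ = ∑ s ∈ J, ⟪a s, a s⟫ := by
    rw [sum_inner]
    refine Finset.sum_congr rfl fun s hs => ?_
    rw [inner_sum]
    exact Finset.sum_eq_single_of_mem s hs fun t ht hne => h s hs t ht (Ne.symm hne)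
  rw [← inner_self_eq_norm_sq (𝕜 := ℂ), h1, map_sum]
  exact Finset.sum_congr rfl fun s _ => inner_self_eq_norm_sq (𝕜 := ℂ) (a s)

/-- If a vector is orthogonal to a set with dense span, it vanishes. -/
lemma aux_dense_inner_ext {s : Set F}
    (hs : Dense ((Submodule.span ℂ s : Submodule ℂ F) : Set F)) {w : F}
    (hw : ∀ x ∈ s, ⟪x, w⟫ = 0) : w = 0 := by
  set φ : F →L[ℂ] ℂ := innerSL ℂ w with hφ
  have hker : (Submodule.span ℂ s : Set F) ⊆ (LinearMap.ker (φ : F →ₗ[ℂ] ℂ) : Set F) := by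
    refine Submodule.span_le.mpr fun x hx => ?_
    have : ⟪w, x⟫ = (0 : ℂ) := by
      rw [← inner_conj_symm, hw x hx, map_zero]
    simpa [φ, LinearMap.mem_ker] using this
  have hcl : IsClosed ((LinearMap.ker (φ : F →ₗ[ℂ] ℂ) : Submodule ℂ F) : Set F) :=
    ContinuousLinearMap.isClosed_ker φ
  have huniv : (Set.univ : Set F) ⊆ (LinearMap.ker (φ : F →ₗ[ℂ] ℂ) : Set F) := by
    rw [← hs.closure_eq]
    exact hcl.closure_subset_iff.mpr hker
  have : φ w = 0 := huniv (Set.mem_univ w)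
  have : ⟪w, w⟫ = (0 : ℂ) := this
  exact inner_self_eq_zero.mp this

end Aux

section Aux2

set_option linter.unusedSectionVars false

variable (E) (A : AmpSpec 𝓕 h 𝓚)

lemma aux_tens_norm (u : h) (x : 𝓕) : ‖A.tens u x‖ = ‖u‖ * ‖x‖ := by
  have h := A.inner_tens u u x x
  rw [inner_self_eq_norm_sq_to_K (𝕜 := ℂ) u, inner_self_eq_norm_sq_to_K (𝕜 := ℂ) x] at h
  have h2 : (‖A.tens u x‖ : ℝ) ^ 2 = (‖u‖ * ‖x‖) ^ 2 := by
    rw [← inner_self_eq_norm_sq (𝕜 := ℂ), h]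
    simp [mul_pow, Complex.ofReal_pow, pow_two, Complex.mul_re, Complex.mul_im]
    ring
  rw [← Real.sqrt_sq (norm_nonneg (A.tens u x)), h2,
    Real.sqrt_sq (by positivity)]

/-- `A.tens u` as a continuous linear map. -/
noncomputable def tensCLM (u : h) : 𝓕 →L[ℂ] 𝓚 :=
  LinearMap.mkContinuous (A.tens u) ‖u‖ fun x => le_of_eq (aux_tens_norm A u x)

@[simp] lemma tensCLM_apply (u : h) (x : 𝓕) : tensCLM A u x = A.tens u x := rfl

lemma aux_denseKE :
    Dense ((Submodule.span ℂ {z : 𝓚 | ∃ v g, z = A.tens v (E.eV g)} :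
      Submodule ℂ 𝓚) : Set 𝓚) := by
  set KE : Set 𝓚 := {z : 𝓚 | ∃ v g, z = A.tens v (E.eV g)} with hKE
  set N := (Submodule.span ℂ KE).topologicalClosure with hN
  have hNclosed : IsClosed (N : Set 𝓚) := Submodule.isClosed_topologicalClosure _
  have hmem : ∀ (u : h) (x : 𝓕), A.tens u x ∈ N := by
    intro u x
    have hx : x ∈ closure ((Submodule.span ℂ (Set.range E.eV)) : Set 𝓕) := by
      rw [E.dense_eV.closure_eq]; trivial
    have hmapsTo : Set.MapsTo (tensCLM A u) ((Submodule.span ℂ (Set.range E.eV)) : Set 𝓕)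
        (N : Set 𝓚) := by
      intro y hy
      have h1 : tensCLM A u y ∈ Submodule.map (tensCLM A u : 𝓕 →ₗ[ℂ] 𝓚)
          (Submodule.span ℂ (Set.range E.eV)) := Submodule.mem_map_of_mem hy
      rw [Submodule.map_span] at h1
      have h2 : Submodule.span ℂ ((tensCLM A u : 𝓕 →ₗ[ℂ] 𝓚) '' Set.range E.eV) ≤
          Submodule.span ℂ KE := by
        refine Submodule.span_le.mpr ?_
        rintro _ ⟨_, ⟨g, rfl⟩, rfl⟩
        exact Submodule.subset_span ⟨u, g, rfl⟩
      exact (Submodule.span ℂ KE).le_topologicalClosure (h2 h1)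
    have := map_mem_closure (tensCLM A u).continuous hx hmapsTo
    rwa [hNclosed.closure_eq] at this
  have hT : (Submodule.span ℂ {z : 𝓚 | ∃ u x, z = A.tens u x}) ≤ N := by
    refine Submodule.span_le.mpr ?_
    rintro _ ⟨u, x, rfl⟩
    exact hmem u x
  have hsub : ((Submodule.span ℂ {z : 𝓚 | ∃ u x, z = A.tens u x}) : Set 𝓚) ⊆
      closure ((Submodule.span ℂ KE : Submodule ℂ 𝓚) : Set 𝓚) := by
    intro z hz
    have h1 := hT hz
    exact h1
  intro z
  have hz : z ∈ closure ((Submodule.span ℂ {z : 𝓚 | ∃ u x, z = A.tens u x}) : Set 𝓚) :=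
    A.dense_tens z
  exact closure_minimal hsub isClosed_closure hz

lemma aux_extK {w : 𝓚} (hw : ∀ (u : h) (f : H), ⟪A.tens u (E.eV f), w⟫ = 0) : w = 0 := by
  refine aux_dense_inner_ext (aux_denseKE E A) ?_
  rintro _ ⟨v, g, rfl⟩
  exact hw v g

lemma aux_eqK {w₁ w₂ : 𝓚}
    (hw : ∀ (u : h) (f : H), ⟪A.tens u (E.eV f), w₁⟫ = ⟪A.tens u (E.eV f), w₂⟫) :
    w₁ = w₂ := by
  have : w₁ - w₂ = 0 := by
    refine aux_extK E A fun u f => ?_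
    rw [inner_sub_right, hw u f, sub_self]
  exact sub_eq_zero.mp this

lemma aux_extF {w : 𝓕} (hw : ∀ f : H, ⟪E.eV f, w⟫ = 0) : w = 0 := by
  refine aux_dense_inner_ext E.dense_eV ?_
  rintro _ ⟨f, rfl⟩
  exact hw f

lemma aux_eqF {w₁ w₂ : 𝓕} (hw : ∀ f : H, ⟪E.eV f, w₁⟫ = ⟪E.eV f, w₂⟫) : w₁ = w₂ := by
  have : w₁ - w₂ = 0 := by
    refine aux_extF E fun f => ?_
    rw [inner_sub_right, hw f, sub_self]
  exact sub_eq_zero.mp this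

/-- Operator extensionality from matrix elements between elementary tensors of
exponential vectors. -/
lemma aux_opExtK {T₁ T₂ : 𝓚 →L[ℂ] 𝓚}
    (hm : ∀ (u : h) (f : H) (v : h) (g : H),
      ⟪A.tens u (E.eV f), T₁ (A.tens v (E.eV g))⟫ =
        ⟪A.tens u (E.eV f), T₂ (A.tens v (E.eV g))⟫) : T₁ = T₂ := by
  refine ContinuousLinearMap.ext_on (aux_denseKE E A) ?_
  rintro _ ⟨v, g, rfl⟩
  exact aux_eqK E A fun u f => hm u f v g

/-- Operator extensionality from values on elementary tensors of exponential
vectors. -/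
lemma aux_opExtK' {T₁ T₂ : 𝓚 →L[ℂ] 𝓚}
    (hm : ∀ (v : h) (g : H), T₁ (A.tens v (E.eV g)) = T₂ (A.tens v (E.eV g))) : T₁ = T₂ := by
  refine ContinuousLinearMap.ext_on (aux_denseKE E A) ?_
  rintro _ ⟨v, g, rfl⟩
  exact hm v g

/-- Operator extensionality from values on all elementary tensors. -/
lemma aux_opExtT {T₁ T₂ : 𝓚 →L[ℂ] 𝓚}
    (hm : ∀ (v : h) (x : 𝓕), T₁ (A.tens v x) = T₂ (A.tens v x)) : T₁ = T₂ := by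
  refine ContinuousLinearMap.ext_on A.dense_tens ?_
  rintro _ ⟨v, x, rfl⟩
  exact hm v x

lemma aux_eqT {w₁ w₂ : 𝓚}
    (hw : ∀ (u : h) (x : 𝓕), ⟪A.tens u x, w₁⟫ = ⟪A.tens u x, w₂⟫) : w₁ = w₂ := by
  have : w₁ - w₂ = 0 := by
    refine aux_dense_inner_ext A.dense_tens ?_
    rintro _ ⟨u, x, rfl⟩
    rw [inner_sub_right, hw u x, sub_self]
  exact sub_eq_zero.mp this

end Aux2

section Aux3

set_option linter.unusedSectionVars false

variable (A : AmpSpec 𝓕 h 𝓚) (S : QST E) (pH : H →L[ℂ] H)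

/-! #### cut algebra -/

lemma aux_cut_cut (t : ℝ≥0∞) (f : H) : E.cut t (E.cut t f) = E.cut t f := by
  rw [E.cut_min, min_self]

lemma aux_cut_sub (t : ℝ≥0∞) (f : H) : E.cut t (f - E.cut t f) = 0 := by
  rw [map_sub, aux_cut_cut, sub_self]

lemma aux_inner_cut_sub (t : ℝ≥0∞) (f g : H) : ⟪E.cut t f, g - E.cut t g⟫ = 0 := by
  rw [E.cut_sa, aux_cut_sub, inner_zero_right]

lemma aux_inner_sub_cut (t : ℝ≥0∞) (f g : H) : ⟪f - E.cut t f, E.cut t g⟫ = 0 := by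
  rw [← E.cut_sa, aux_cut_sub, inner_zero_left]

lemma aux_inner_cut_right (t : ℝ≥0∞) (f g : H) :
    ⟪f, E.cut t g⟫ = ⟪E.cut t f, E.cut t g⟫ := by
  have hc := aux_inner_sub_cut (E := E) t f g
  rw [inner_sub_left, sub_eq_zero] at hc
  exact hc

lemma aux_inner_cut_left (t : ℝ≥0∞) (f g : H) :
    ⟪E.cut t f, g⟫ = ⟪E.cut t f, E.cut t g⟫ := by
  have hc := aux_inner_cut_sub (E := E) t f g
  rw [inner_sub_right, sub_eq_zero] at hc
  exact hc

/-! #### the `p`-hat map -/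

/-- `ĝ = g|_{[0,t)} + p (g - g|_{[0,t)})`. -/
noncomputable def auxHat (t : ℝ≥0∞) (g : H) : H := E.cut t g + pH (g - E.cut t g)

variable (hpsa : ∀ f g : H, ⟪pH f, g⟫ = ⟪f, pH g⟫) (hpi : pH ∘L pH = pH)
  (hpc : ∀ (u : ℝ≥0∞) (f : H), E.cut u (pH f) = pH (E.cut u f))

section Hat
include hpc

lemma aux_hat_cut (t : ℝ≥0∞) (g : H) :
    E.cut t (auxHat (E := E) pH t g) = E.cut t g := by
  rw [auxHat, map_add, aux_cut_cut, hpc, aux_cut_sub, map_zero, add_zero]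

lemma aux_hat_sub (t : ℝ≥0∞) (g : H) :
    auxHat (E := E) pH t g - E.cut t (auxHat (E := E) pH t g) = pH (g - E.cut t g) := by
  rw [aux_hat_cut pH hpc, auxHat, add_sub_cancel_left]

include hpi in
lemma aux_hat_hat (t : ℝ≥0∞) (g : H) :
    auxHat (E := E) pH t (auxHat (E := E) pH t g) = auxHat (E := E) pH t g := by
  conv_lhs => rw [auxHat]
  rw [aux_hat_sub pH hpc, aux_hat_cut pH hpc,
    show pH (pH (g - E.cut t g)) = pH (g - E.cut t g) from DFunLike.congr_fun hpi _, auxHat]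

include hpsa in
lemma aux_inner_hat_right (t : ℝ≥0∞) (f g : H) :
    ⟪f, auxHat (E := E) pH t g⟫ =
      ⟪E.cut t f, E.cut t g⟫ + ⟪f - E.cut t f, pH (g - E.cut t g)⟫ := by
  rw [auxHat, inner_add_right, aux_inner_cut_right]
  congr 1
  have h1 : ⟪E.cut t f, pH (g - E.cut t g)⟫ = 0 := by
    rw [← hpsa, ← hpc, aux_inner_cut_sub]
  rw [inner_sub_left, h1, sub_zero]

include hpsa in
lemma aux_inner_hat_left (t : ℝ≥0∞) (f g : H) :
    ⟪auxHat (E := E) pH t f, g⟫ =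
      ⟪E.cut t f, E.cut t g⟫ + ⟪f - E.cut t f, pH (g - E.cut t g)⟫ := by
  rw [auxHat, inner_add_left, aux_inner_cut_left]
  congr 1
  have h1 : ⟪pH (f - E.cut t f), g⟫ = ⟪f - E.cut t f, pH g⟫ := hpsa _ _
  rw [h1]
  have h2 : ⟪f - E.cut t f, pH (E.cut t g)⟫ = 0 := by
    rw [← hpc, aux_inner_sub_cut]
  have h3 : pH g = pH (E.cut t g) + pH (g - E.cut t g) := by
    rw [← map_add, add_sub_cancel]
  rw [h3, inner_add_right, h2, zero_add]

end Hat

/-! #### shift algebra -/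

lemma aux_shiftL_cut (a : ℝ≥0∞) (g : H) : E.shiftL a (E.cut a g) = 0 := by
  refine ext_inner_left ℂ fun v => ?_
  rw [← E.shiftL_adj, inner_zero_right]
  calc ⟪E.shift a v, E.cut a g⟫ = ⟪E.cut a (E.shift a v), E.cut a g⟫ := by
        rw [aux_inner_cut_right]
    _ = 0 := by rw [E.cut_shift, inner_zero_left]

lemma aux_shiftL_sub (a : ℝ≥0∞) (g : H) :
    E.shiftL a (g - E.cut a g) = E.shiftL a g := by
  rw [map_sub, aux_shiftL_cut, sub_zero]

lemma aux_shiftL_shift {a : ℝ≥0∞} (ha : a ≠ ⊤) (k : H) :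
    E.shiftL a (E.shift a k) = k := by
  refine ext_inner_left ℂ fun v => ?_
  rw [← E.shiftL_adj, E.shift_inner a ha]

lemma aux_inner_shift_right (a : ℝ≥0∞) (f k : H) :
    ⟪f, E.shift a k⟫ = ⟪E.shiftL a f, k⟫ := by
  rw [← inner_conj_symm, E.shiftL_adj, inner_conj_symm]

/-! #### amp algebra -/

lemma aux_amp_comp (X Y : 𝓕 →L[ℂ] 𝓕) :
    A.amp X ∘L A.amp Y = A.amp (X ∘L Y) := by
  refine aux_opExtT A fun v x => ?_
  simp [ContinuousLinearMap.comp_apply, A.amp_tens]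

lemma aux_amp_amp (X Y : 𝓕 →L[ℂ] 𝓕) (z : 𝓚) :
    A.amp X (A.amp Y z) = A.amp (X ∘L Y) z := by
  rw [← aux_amp_comp]; rfl

lemma aux_amp_zero : A.amp 0 = 0 := by
  refine aux_opExtT A fun v x => ?_
  simp [A.amp_tens]

lemma aux_amp_add (X Y : 𝓕 →L[ℂ] 𝓕) : A.amp (X + Y) = A.amp X + A.amp Y := by
  refine aux_opExtT A fun v x => ?_
  simp [A.amp_tens, ContinuousLinearMap.add_apply]

lemma aux_amp_sum {ι : Type*} (J : Finset ι) (W : ι → 𝓕 →L[ℂ] 𝓕) :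
    A.amp (∑ i ∈ J, W i) = ∑ i ∈ J, A.amp (W i) := by
  classical
  induction J using Finset.induction_on with
  | empty => simpa using aux_amp_zero A
  | insert _ _ hni ih =>
      rw [Finset.sum_insert hni, Finset.sum_insert hni, aux_amp_add, ih]

lemma aux_amp_adjoint (W : 𝓕 →L[ℂ] 𝓕) :
    ContinuousLinearMap.adjoint (A.amp W) = A.amp (ContinuousLinearMap.adjoint W) := by
  refine aux_opExtT A fun v x => ?_
  refine aux_eqT A fun u' x' => ?_
  rw [ContinuousLinearMap.adjoint_inner_right, A.amp_tens, A.amp_tens, A.inner_tens,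
    A.inner_tens, ContinuousLinearMap.adjoint_inner_right]

lemma aux_amp_contraction (W : 𝓕 →L[ℂ] 𝓕)
    (hsa : ContinuousLinearMap.adjoint W = W) (hidem : W ∘L W = W) (z : 𝓚) :
    ‖A.amp W z‖ ≤ ‖z‖ := by
  refine aux_contraction ?_ ?_ z
  · rw [aux_amp_adjoint, hsa]
  · rw [aux_amp_comp, hidem]

/-! #### spectral measure algebra -/

lemma aux_meas_adj (A' : Set ℝ≥0∞) :
    ContinuousLinearMap.adjoint (S.meas A') = S.meas A' := by
  rw [← ContinuousLinearMap.star_eq_adjoint]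
  exact S.sa A'

lemma aux_meas_union {A' B' : Set ℝ≥0∞} (hd : Disjoint A' B')
    (hA : MeasurableSet A') (hB : MeasurableSet B') :
    S.meas (A' ∪ B') = S.meas A' + S.meas B' := by
  refine ContinuousLinearMap.ext fun y => ?_
  refine ext_inner_left ℂ fun x => ?_
  rw [← S.cm_apply x y _ (hA.union hB),
    MeasureTheory.VectorMeasure.of_union hd hA hB,
    S.cm_apply _ _ _ hA, S.cm_apply _ _ _ hB]
  simp [inner_add_right]

lemma aux_meas_empty : S.meas ∅ = 0 := by
  have hd : Disjoint (∅ : Set ℝ≥0∞) ∅ := by simp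
  have hh := aux_meas_union S hd MeasurableSet.empty MeasurableSet.empty
  rw [Set.union_self] at hh
  have h2 : S.meas ∅ + S.meas ∅ = S.meas ∅ + 0 := by rw [← hh, add_zero]
  exact add_left_cancel h2

lemma aux_proj_disj_ring {R : Type*} [Ring R] [Module ℂ R] {p q : R}
    (hp : p * p = p) (hq : q * q = q)
    (hpq : (p + q) * (p + q) = p + q) : p * q = 0 := by
  have h0 : p * q + q * p = 0 := by
    have hx : (p + q) * (p + q) = p + (p * q + (q * p + q)) := by
      rw [add_mul, mul_add, mul_add, hp, hq]; abel
    rw [hx] at hpq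
    have h3 : p * q + (q * p + q) = q := add_left_cancel hpq
    calc p * q + q * p = p * q + (q * p + q) - q := by abel
      _ = q - q := by rw [h3]
      _ = 0 := sub_self q
  have h1 : p * q + p * (q * p) = 0 := by
    have hc := congrArg (fun z => p * z) h0
    simp only [mul_add, mul_zero] at hc
    rw [show p * (p * q) = p * q by rw [← mul_assoc, hp]] at hc
    exact hc
  have h2 : p * (q * p) + q * p = 0 := by
    have hc := congrArg (fun z => z * p) h0
    simp only [add_mul, zero_mul] at hc
    rw [show p * q * p = p * (q * p) from mul_assoc p q p,
      show q * p * p = q * p by rw [mul_assoc, hp]] at hc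
    exact hc
  have e1 : p * q = -(p * (q * p)) := eq_neg_of_add_eq_zero_left h1
  have e2 : p * (q * p) = -(q * p) := eq_neg_of_add_eq_zero_left h2
  have h4 : p * q = q * p := by rw [e1, e2, neg_neg]
  rw [h4] at h0
  have hx2 : ((2 : ℂ)) • (q * p) = 0 := by
    rw [two_smul]; exact h0
  have h5 : q * p = 0 := by
    have h6 := congrArg (fun z => ((2 : ℂ))⁻¹ • z) hx2
    simpa [smul_smul] using h6
  rw [h4]; exact h5

lemma aux_meas_disjoint {A' B' : Set ℝ≥0∞} (hd : Disjoint A' B')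
    (hA : MeasurableSet A') (hB : MeasurableSet B') :
    S.meas A' ∘L S.meas B' = 0 := by
  have hP : S.meas A' * S.meas A' = S.meas A' := S.idem A'
  have hQ : S.meas B' * S.meas B' = S.meas B' := S.idem B'
  have hPQ : (S.meas A' + S.meas B') * (S.meas A' + S.meas B') =
      S.meas A' + S.meas B' := by
    rw [← aux_meas_union S hd hA hB]
    exact S.idem _
  exact aux_proj_disj_ring hP hQ hPQ

lemma aux_meas_inter {A' B' : Set ℝ≥0∞}
    (hA : MeasurableSet A') (hB : MeasurableSet B') :
    S.meas A' ∘L S.meas B' = S.meas (A' ∩ B') := by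
  have hA' : A' ∩ B' ∪ A' \ B' = A' := Set.inter_union_diff A' B'
  have hB' : A' ∩ B' ∪ B' \ A' = B' := by
    rw [Set.inter_comm]; exact Set.inter_union_diff B' A'
  have d1 : Disjoint (A' ∩ B') (A' \ B') := Set.disjoint_sdiff_right.mono_left
    Set.inter_subset_right
  have d2 : Disjoint (A' ∩ B') (B' \ A') := Set.disjoint_sdiff_right.mono_left
    Set.inter_subset_left
  have d3 : Disjoint (A' \ B') (B' \ A') :=
    Set.disjoint_left.mpr fun x hx hx' => hx.2 hx'.1
  have m1 : MeasurableSet (A' ∩ B') := hA.inter hB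
  have m2 : MeasurableSet (A' \ B') := hA.diff hB
  have m3 : MeasurableSet (B' \ A') := hB.diff hA
  have e1 : S.meas A' = S.meas (A' ∩ B') + S.meas (A' \ B') := by
    rw [← aux_meas_union S d1 m1 m2, hA']
  have e2 : S.meas B' = S.meas (A' ∩ B') + S.meas (B' \ A') := by
    rw [← aux_meas_union S d2 m1 m3, hB']
  rw [e1, e2, ContinuousLinearMap.add_comp, ContinuousLinearMap.comp_add,
    ContinuousLinearMap.comp_add, S.idem, aux_meas_disjoint S d2 m1 m3,
    aux_meas_disjoint S d1.symm m2 m1, aux_meas_disjoint S d3 m2 m3]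
  simp

end Aux3

section Aux4

set_option linter.unusedSectionVars false
set_option maxHeartbeats 1000000

variable (A : AmpSpec 𝓕 h 𝓚) (S : QST E) (pH : H →L[ℂ] H)
variable (Sig : ℝ≥0∞ → (𝓚 →L[ℂ] 𝓚) → 𝓚 →L[ℂ] 𝓚) (V Vhat : ℝ≥0∞ → 𝓚 →L[ℂ] 𝓚)

/-- KEY1 : `V_a (v ⊗ ε(g)) = V̂_a (v ⊗ ε(ĝ))`. -/
lemma aux_key1 (hpc : ∀ (u : ℝ≥0∞) (f : H), E.cut u (pH f) = pH (E.cut u f))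
    (hVp : PAdapted E A pH V) (hhat : IsHatOf E A V Vhat)
    {a : ℝ≥0∞} (ha : a ≠ ⊤) (v : h) (g : H) :
    V a (A.tens v (E.eV g)) = Vhat a (A.tens v (E.eV (auxHat (E := E) pH a g))) := by
  refine aux_eqK E A fun u f => ?_
  rw [hVp a ha u v f g, hhat a ha u v f (auxHat (E := E) pH a g),
    aux_hat_sub pH hpc, aux_hat_cut pH hpc]

lemma aux_vhat_inner (hiso : IsometricHat Vhat) {a : ℝ≥0∞} (ha : a ≠ ⊤) (x y : 𝓚) :
    ⟪Vhat a x, Vhat a y⟫ = ⟪x, y⟫ := by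
  let f : 𝓚 →ₗᵢ[ℂ] 𝓚 := ⟨(Vhat a : 𝓚 →ₗ[ℂ] 𝓚), hiso a ha⟩
  exact f.inner_map_map x y

lemma aux_vhat_adj_vhat (hiso : IsometricHat Vhat) {a : ℝ≥0∞} (ha : a ≠ ⊤) (z : 𝓚) :
    ContinuousLinearMap.adjoint (Vhat a) (Vhat a z) = z := by
  refine ext_inner_left ℂ fun x => ?_
  rw [ContinuousLinearMap.adjoint_inner_right, aux_vhat_inner Vhat hiso ha]

/-- `Q_a = V̂_a^* V_a`, the ampliated second quantisation of `p` from time `a`. -/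
noncomputable def auxQ (a : ℝ≥0∞) : 𝓚 →L[ℂ] 𝓚 :=
  ContinuousLinearMap.adjoint (Vhat a) ∘L V a

lemma auxQ_apply (hpc : ∀ (u : ℝ≥0∞) (f : H), E.cut u (pH f) = pH (E.cut u f))
    (hVp : PAdapted E A pH V) (hhat : IsHatOf E A V Vhat) (hiso : IsometricHat Vhat)
    {a : ℝ≥0∞} (ha : a ≠ ⊤) (v : h) (g : H) :
    auxQ V Vhat a (A.tens v (E.eV g)) = A.tens v (E.eV (auxHat (E := E) pH a g)) := by
  show ContinuousLinearMap.adjoint (Vhat a) (V a (A.tens v (E.eV g))) = _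
  rw [aux_key1 A pH V Vhat hpc hVp hhat ha, aux_vhat_adj_vhat Vhat hiso ha]

lemma auxQ_sa (hpsa : ∀ f g : H, ⟪pH f, g⟫ = ⟪f, pH g⟫)
    (hpc : ∀ (u : ℝ≥0∞) (f : H), E.cut u (pH f) = pH (E.cut u f))
    (hVp : PAdapted E A pH V) (hhat : IsHatOf E A V Vhat) (hiso : IsometricHat Vhat)
    {a : ℝ≥0∞} (ha : a ≠ ⊤) :
    ContinuousLinearMap.adjoint (auxQ V Vhat a) = auxQ V Vhat a := by
  refine aux_opExtK E A fun u f v g => ?_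
  rw [ContinuousLinearMap.adjoint_inner_right,
    auxQ_apply A pH V Vhat hpc hVp hhat hiso ha,
    auxQ_apply A pH V Vhat hpc hVp hhat hiso ha,
    A.inner_tens, A.inner_tens, E.inner_eV, E.inner_eV,
    aux_inner_hat_left pH hpsa hpc, aux_inner_hat_right pH hpsa hpc]

lemma auxQ_idem (hpsa : ∀ f g : H, ⟪pH f, g⟫ = ⟪f, pH g⟫) (hpi : pH ∘L pH = pH)
    (hpc : ∀ (u : ℝ≥0∞) (f : H), E.cut u (pH f) = pH (E.cut u f))
    (hVp : PAdapted E A pH V) (hhat : IsHatOf E A V Vhat) (hiso : IsometricHat Vhat)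
    {a : ℝ≥0∞} (ha : a ≠ ⊤) :
    auxQ V Vhat a ∘L auxQ V Vhat a = auxQ V Vhat a := by
  refine aux_opExtK' E A fun v g => ?_
  rw [ContinuousLinearMap.comp_apply, auxQ_apply A pH V Vhat hpc hVp hhat hiso ha,
    auxQ_apply A pH V Vhat hpc hVp hhat hiso ha,
    aux_hat_hat pH hpi hpc]

lemma auxV_eq (hpc : ∀ (u : ℝ≥0∞) (f : H), E.cut u (pH f) = pH (E.cut u f))
    (hVp : PAdapted E A pH V) (hhat : IsHatOf E A V Vhat) (hiso : IsometricHat Vhat)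
    {a : ℝ≥0∞} (ha : a ≠ ⊤) :
    V a = Vhat a ∘L auxQ V Vhat a := by
  refine aux_opExtK' E A fun v g => ?_
  rw [ContinuousLinearMap.comp_apply, auxQ_apply A pH V Vhat hpc hVp hhat hiso ha,
    aux_key1 A pH V Vhat hpc hVp hhat ha]

lemma auxV_contraction (hpsa : ∀ f g : H, ⟪pH f, g⟫ = ⟪f, pH g⟫) (hpi : pH ∘L pH = pH)
    (hpc : ∀ (u : ℝ≥0∞) (f : H), E.cut u (pH f) = pH (E.cut u f))
    (hVp : PAdapted E A pH V) (hhat : IsHatOf E A V Vhat) (hiso : IsometricHat Vhat)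
    {a : ℝ≥0∞} (ha : a ≠ ⊤) (z : 𝓚) : ‖V a z‖ ≤ ‖z‖ := by
  rw [auxV_eq A pH V Vhat hpc hVp hhat hiso ha]
  rw [ContinuousLinearMap.comp_apply, hiso a ha]
  exact aux_contraction (auxQ_sa A pH V Vhat hpsa hpc hVp hhat hiso ha)
    (auxQ_idem A pH V Vhat hpsa hpi hpc hVp hhat hiso ha) z

/-! #### adaptedness -/

lemma aux_adapted_mono {X : 𝓕 →L[ℂ] 𝓕} {d a : ℝ≥0∞} (hX : E.AdaptedAt X d)
    (hda : d ≤ a) : E.AdaptedAt X a := by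
  intro f g
  have hcc : ∀ k : H, E.cut d (E.cut a k) = E.cut d k := fun k => by
    rw [E.cut_min, min_eq_left hda]
  have key : ⟪f - E.cut d f, g - E.cut d g⟫ =
      ⟪E.cut a f - E.cut d f, E.cut a g - E.cut d g⟫ + ⟪f - E.cut a f, g - E.cut a g⟫ := by
    have hf : f - E.cut d f = (f - E.cut a f) + (E.cut a f - E.cut d f) := by abel
    have hg : g - E.cut d g = (g - E.cut a g) + (E.cut a g - E.cut d g) := by abel
    rw [hf, hg, inner_add_left, inner_add_right, inner_add_right]
    have c1 : ⟪f - E.cut a f, E.cut a g - E.cut d g⟫ = 0 := by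
      rw [inner_sub_right, aux_inner_sub_cut]
      have : ⟪f - E.cut a f, E.cut d g⟫ = 0 := by
        rw [← E.cut_sa, map_sub, hcc, sub_self, inner_zero_left]
      rw [this]; simp
    have c2 : ⟪E.cut a f - E.cut d f, g - E.cut a g⟫ = 0 := by
      rw [inner_sub_left, aux_inner_cut_sub]
      have : ⟪E.cut d f, g - E.cut a g⟫ = 0 := by
        rw [E.cut_sa, map_sub, hcc, sub_self, inner_zero_right]
      rw [this]; simp
    rw [c1, c2]
    ring
  rw [hX f g, hX (E.cut a f) (E.cut a g), hcc, hcc, key, Complex.exp_add]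
  ring

lemma aux_adapted_sub {X Y : 𝓕 →L[ℂ] 𝓕} {a : ℝ≥0∞} (hX : E.AdaptedAt X a)
    (hY : E.AdaptedAt Y a) : E.AdaptedAt (X - Y) a := by
  intro f g
  have hx := hX f g
  have hy := hY f g
  conv_rhs => rw [ContinuousLinearMap.sub_apply, inner_sub_right]
  conv_lhs => rw [ContinuousLinearMap.sub_apply, inner_sub_right, hx, hy]
  ring

lemma aux_Iic_split (S : QST E) {c d : ℝ≥0∞} (hcd : c ≤ d) :
    S.meas (Set.Iic d) = S.meas (Set.Iic c) + S.meas (Set.Ioc c d) := by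
  rw [← aux_meas_union S _ measurableSet_Iic measurableSet_Ioc, Set.Iic_union_Ioc_eq_Iic hcd]
  exact Set.Iic_disjoint_Ioc le_rfl

lemma aux_adapted_Iic (S : QST E) {r a : ℝ≥0∞} (hr : r ≤ a) (ha : a ≠ ⊤) :
    E.AdaptedAt (S.meas (Set.Iic r)) a := by
  have hrt : r ≠ ⊤ := by
    intro hrr; rw [hrr] at hr; exact ha (top_le_iff.mp hr)
  have := S.adapted r hrt
  exact aux_adapted_mono (E := E) this hr

lemma aux_adapted_Ioc (S : QST E) {c d a : ℝ≥0∞} (hcd : c ≤ d) (hda : d ≤ a)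
    (ha : a ≠ ⊤) : E.AdaptedAt (S.meas (Set.Ioc c d)) a := by
  have hsplit := aux_Iic_split S hcd
  have : S.meas (Set.Ioc c d) = S.meas (Set.Iic d) - S.meas (Set.Iic c) := by
    rw [hsplit]; abel
  rw [this]
  exact aux_adapted_sub (E := E) (aux_adapted_Iic S hda ha)
    (aux_adapted_Iic S (hcd.trans hda) ha)

/-! #### the CCR flow on exponential vectors -/

lemma aux_gam_adj (a : ℝ≥0∞) :
    ContinuousLinearMap.adjoint (E.Gam a) = E.GamL a := by
  refine ContinuousLinearMap.ext fun y => ext_inner_left ℂ fun x => ?_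
  rw [ContinuousLinearMap.adjoint_inner_right, E.GamL_adj]

lemma auxJ_eV (a : ℝ≥0∞) (g k : H) :
    (E.past g a ∘L E.Gam a) (E.eV k) = E.eV (E.cut a g + E.shift a k) := by
  rw [ContinuousLinearMap.comp_apply, E.Gam_eV, E.past_eV, E.cut_shift, sub_zero]

lemma auxJadj_eV {a : ℝ≥0∞} (ha : a ≠ ⊤) (g f : H) :
    ContinuousLinearMap.adjoint (E.past g a ∘L E.Gam a) (E.eV f) =
      Complex.exp ⟪E.cut a g, E.cut a f⟫ • E.eV (E.shiftL a f) := by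
  refine aux_eqF E fun k => ?_
  rw [ContinuousLinearMap.adjoint_inner_right, auxJ_eV, E.inner_eV, inner_smul_right,
    E.inner_eV, inner_add_left, Complex.exp_add, aux_inner_cut_left, E.shiftL_adj]

/-- KEY3: the action of the ampliated flow on elementary tensors of exponential
vectors. -/
lemma aux_key3 (hSig : IsAmpCCRFlow E A Sig) {a : ℝ≥0∞} (ha : a ≠ ⊤)
    (X : 𝓚 →L[ℂ] 𝓚) (v : h) (g : H) :
    Sig a X (A.tens v (E.eV g)) =
      A.amp (E.past g a ∘L E.Gam a) (X (A.tens v (E.eV (E.shiftL a g)))) := by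
  refine aux_eqK E A fun u f => ?_
  rw [hSig a ha X u v f g, ← ContinuousLinearMap.adjoint_inner_left (A.amp _),
    aux_amp_adjoint, A.amp_tens, auxJadj_eV ha, LinearMap.map_smul, inner_smul_left,
    ← Complex.exp_conj, inner_conj_symm]

lemma aux_sig_adj (hSig : IsAmpCCRFlow E A Sig) {a : ℝ≥0∞} (ha : a ≠ ⊤)
    (X : 𝓚 →L[ℂ] 𝓚) :
    ContinuousLinearMap.adjoint (Sig a X) = Sig a (ContinuousLinearMap.adjoint X) := by
  refine aux_opExtK E A fun u f v g => ?_
  rw [ContinuousLinearMap.adjoint_inner_right, ← inner_conj_symm, hSig a ha X v u g f,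
    map_mul, ← Complex.exp_conj, inner_conj_symm, inner_conj_symm,
    hSig a ha _ u v f g, ContinuousLinearMap.adjoint_inner_right]

/-- The β-claim: `J_f^* (Y ε(g)) = ⟨ε(f_a), Y ε(g_a)⟩ ε(L_a g)` for `Y` adapted
at `a`. -/
lemma aux_beta {a : ℝ≥0∞} (ha : a ≠ ⊤) {Y : 𝓕 →L[ℂ] 𝓕} (hY : E.AdaptedAt Y a)
    (f g : H) :
    ContinuousLinearMap.adjoint (E.past f a ∘L E.Gam a) (Y (E.eV g)) =
      ⟪E.eV (E.cut a f), Y (E.eV (E.cut a g))⟫ • E.eV (E.shiftL a g) := by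
  refine aux_eqF E fun k => ?_
  rw [ContinuousLinearMap.adjoint_inner_right, auxJ_eV, hY (E.cut a f + E.shift a k) g]
  have e1 : E.cut a (E.cut a f + E.shift a k) = E.cut a f := by
    rw [map_add, aux_cut_cut, E.cut_shift, add_zero]
  rw [e1, add_sub_cancel_left, E.shiftL_adj, aux_shiftL_sub, inner_smul_right, E.inner_eV]

/-- Commutation of the ampliation of an adapted self-adjoint operator with the
ampliated CCR flow. -/
lemma aux_sig_comm (hSig : IsAmpCCRFlow E A Sig) {a : ℝ≥0∞} (ha : a ≠ ⊤)
    {Y : 𝓕 →L[ℂ] 𝓕} (hYsa : ContinuousLinearMap.adjoint Y = Y) (hY : E.AdaptedAt Y a)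
    (X : 𝓚 →L[ℂ] 𝓚) :
    A.amp Y ∘L Sig a X = Sig a X ∘L A.amp Y := by
  refine aux_opExtK E A fun u f v g => ?_
  have hM1 : ⟪A.tens u (E.eV f), (A.amp Y ∘L Sig a X) (A.tens v (E.eV g))⟫ =
      ⟪E.eV (E.cut a f), Y (E.eV (E.cut a g))⟫ *
        ⟪A.tens u (E.eV (E.shiftL a f)), X (A.tens v (E.eV (E.shiftL a g)))⟫ := by
    rw [ContinuousLinearMap.comp_apply, ← ContinuousLinearMap.adjoint_inner_left (A.amp Y),
      aux_amp_adjoint, hYsa, A.amp_tens, aux_key3 A Sig hSig ha,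
      ← ContinuousLinearMap.adjoint_inner_left (A.amp _), aux_amp_adjoint, A.amp_tens,
      aux_beta ha hY, LinearMap.map_smul, inner_smul_left, inner_conj_symm,
      ← ContinuousLinearMap.adjoint_inner_right Y, hYsa]
  have hM2 : ⟪A.tens u (E.eV f), (Sig a X ∘L A.amp Y) (A.tens v (E.eV g))⟫ =
      ⟪E.eV (E.cut a f), Y (E.eV (E.cut a g))⟫ *
        ⟪A.tens u (E.eV (E.shiftL a f)), X (A.tens v (E.eV (E.shiftL a g)))⟫ := by
    rw [ContinuousLinearMap.comp_apply, A.amp_tens,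
      ← ContinuousLinearMap.adjoint_inner_left (Sig a X), aux_sig_adj A Sig hSig ha,
      aux_key3 A Sig hSig ha,
      ← ContinuousLinearMap.adjoint_inner_right (A.amp (E.past f a ∘L E.Gam a)),
      aux_amp_adjoint, A.amp_tens, aux_beta ha hY, LinearMap.map_smul, inner_smul_right,
      ContinuousLinearMap.adjoint_inner_left]
  rw [hM1, hM2]

end Aux4

section Aux5

set_option linter.unusedSectionVars false
set_option maxHeartbeats 1000000

variable (A : AmpSpec 𝓕 h 𝓚) (S : QST E) (pH : H →L[ℂ] H)
variable (Sig : ℝ≥0∞ → (𝓚 →L[ℂ] 𝓚) → 𝓚 →L[ℂ] 𝓚) (V Vhat : ℝ≥0∞ → 𝓚 →L[ℂ] 𝓚)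

lemma auxQ_comm (hpsa : ∀ f g : H, ⟪pH f, g⟫ = ⟪f, pH g⟫)
    (hpc : ∀ (u : ℝ≥0∞) (f : H), E.cut u (pH f) = pH (E.cut u f))
    (hVp : PAdapted E A pH V) (hhat : IsHatOf E A V Vhat) (hiso : IsometricHat Vhat)
    {a : ℝ≥0∞} (ha : a ≠ ⊤) {Y : 𝓕 →L[ℂ] 𝓕} (hY : E.AdaptedAt Y a) :
    auxQ V Vhat a ∘L A.amp Y = A.amp Y ∘L auxQ V Vhat a := by
  refine aux_opExtK E A fun u f v g => ?_
  have hL : ⟪A.tens u (E.eV f), (auxQ V Vhat a ∘L A.amp Y) (A.tens v (E.eV g))⟫ =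
      ⟪u, v⟫ * (⟪E.eV (E.cut a f), Y (E.eV (E.cut a g))⟫ *
        Complex.exp ⟪f - E.cut a f, pH (g - E.cut a g)⟫) := by
    rw [ContinuousLinearMap.comp_apply,
      ← ContinuousLinearMap.adjoint_inner_left (auxQ V Vhat a),
      auxQ_sa A pH V Vhat hpsa hpc hVp hhat hiso ha,
      auxQ_apply A pH V Vhat hpc hVp hhat hiso ha, A.amp_tens, A.inner_tens,
      hY (auxHat (E := E) pH a f) g, aux_hat_sub pH hpc, aux_hat_cut pH hpc,
      hpsa (f - E.cut a f) (g - E.cut a g)]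
  have hR : ⟪A.tens u (E.eV f), (A.amp Y ∘L auxQ V Vhat a) (A.tens v (E.eV g))⟫ =
      ⟪u, v⟫ * (⟪E.eV (E.cut a f), Y (E.eV (E.cut a g))⟫ *
        Complex.exp ⟪f - E.cut a f, pH (g - E.cut a g)⟫) := by
    rw [ContinuousLinearMap.comp_apply, auxQ_apply A pH V Vhat hpc hVp hhat hiso ha,
      A.amp_tens, A.inner_tens, hY f (auxHat (E := E) pH a g),
      aux_hat_sub pH hpc, aux_hat_cut pH hpc]
  rw [hL, hR]

/-- Vanishing of the cross terms in the Riemann sums. -/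
lemma aux_cross (hpsa : ∀ f g : H, ⟪pH f, g⟫ = ⟪f, pH g⟫)
    (hpc : ∀ (u : ℝ≥0∞) (f : H), E.cut u (pH f) = pH (E.cut u f))
    (hSig : IsAmpCCRFlow E A Sig)
    (hVp : PAdapted E A pH V) (hhat : IsHatOf E A V Vhat) (hiso : IsometricHat Vhat)
    (hcoc : IsLeftCocycle Sig V Vhat)
    {a b : ℝ≥0∞} (ha : a ≠ ⊤) (hb : b ≠ ⊤) (hab : a < b)
    {c d c' d' : ℝ≥0∞} (hcd : c ≤ d) (hda : d ≤ a) (hac' : a ≤ c') (x y : 𝓚) :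
    ⟪V a (A.amp (S.meas (Set.Ioc c d)) x), V b (A.amp (S.meas (Set.Ioc c' d')) y)⟫
      = 0 := by
  have hYsa : ContinuousLinearMap.adjoint (S.meas (Set.Ioc c d)) = S.meas (Set.Ioc c d) :=
    aux_meas_adj S _
  have hYad : E.AdaptedAt (S.meas (Set.Ioc c d)) a := aux_adapted_Ioc S hcd hda ha
  have hbma : b - a ≠ ⊤ := by
    intro hc
    exact hb (top_le_iff.mp (hc ▸ tsub_le_self))
  have hVb : V b = Vhat a ∘L Sig a (V (b - a)) := by
    have hco := hcoc a (b - a) ha hbma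
    rwa [add_tsub_cancel_of_le hab.le] at hco
  have hdisj : Disjoint (Set.Ioc c d) (Set.Ioc c' d') :=
    Set.disjoint_left.mpr fun s hs hs' =>
      ((hs.2.trans (hda.trans hac')).not_gt hs'.1)
  rw [auxV_eq A pH V Vhat hpc hVp hhat hiso ha, hVb]
  rw [ContinuousLinearMap.comp_apply, ContinuousLinearMap.comp_apply,
    aux_vhat_inner Vhat hiso ha]
  rw [show auxQ V Vhat a (A.amp (S.meas (Set.Ioc c d)) x) =
      A.amp (S.meas (Set.Ioc c d)) (auxQ V Vhat a x) from
    DFunLike.congr_fun (auxQ_comm A pH V Vhat hpsa hpc hVp hhat hiso ha hYad) x]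
  rw [← ContinuousLinearMap.adjoint_inner_right (A.amp (S.meas (Set.Ioc c d))),
    aux_amp_adjoint, hYsa]
  rw [show A.amp (S.meas (Set.Ioc c d)) (Sig a (V (b - a))
        (A.amp (S.meas (Set.Ioc c' d')) y)) =
      Sig a (V (b - a)) (A.amp (S.meas (Set.Ioc c d))
        (A.amp (S.meas (Set.Ioc c' d')) y)) from
    DFunLike.congr_fun (aux_sig_comm A Sig hSig ha hYsa hYad (V (b - a))) _]
  rw [aux_amp_amp, aux_meas_disjoint S hdisj measurableSet_Ioc measurableSet_Ioc,
    aux_amp_zero]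
  simp

/-! #### partitions -/

lemma aux_part_mem_le {t : ℝ≥0∞} (π : TPartition t) {s : ℝ≥0∞}
    (hs : s ∈ π.pts.erase 0) : s ≤ t := π.mem_le s (Finset.mem_of_mem_erase hs)

lemma aux_pred_lt {t : ℝ≥0∞} (π : TPartition t) {s : ℝ≥0∞}
    (hs : s ∈ π.pts.erase 0) : π.pred s < s := by
  have hs0 : s ≠ 0 := Finset.ne_of_mem_erase hs
  have hpos : (⊥ : ℝ≥0∞) < s := pos_iff_ne_zero.mpr hs0
  refine Finset.sup_lt_iff hpos |>.mpr ?_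
  intro b hb
  exact (Finset.mem_filter.mp hb).2

lemma aux_pred_ge {t : ℝ≥0∞} (π : TPartition t) {s s' : ℝ≥0∞}
    (hs' : s' ∈ π.pts) (hlt : s' < s) : s' ≤ π.pred s :=
  Finset.le_sup (f := id) (Finset.mem_filter.mpr ⟨hs', hlt⟩)

/-- The Riemann sums of an isometric `p`-adapted cocycle are contractions. -/
lemma aux_vsum_bound (hpsa : ∀ f g : H, ⟪pH f, g⟫ = ⟪f, pH g⟫) (hpi : pH ∘L pH = pH)
    (hpc : ∀ (u : ℝ≥0∞) (f : H), E.cut u (pH f) = pH (E.cut u f))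
    (hSig : IsAmpCCRFlow E A Sig)
    (hVp : PAdapted E A pH V) (hhat : IsHatOf E A V Vhat) (hiso : IsometricHat Vhat)
    (hcoc : IsLeftCocycle Sig V Vhat)
    {u : ℝ≥0∞} (hu : u ≠ ⊤) (π : TPartition u) (z : 𝓚) :
    ‖(VSum A S V π) z‖ ≤ ‖z‖ := by
  classical
  set J := π.pts.erase 0 with hJ
  have hne : ∀ s ∈ J, s ≠ ⊤ := fun s hs =>
    (lt_of_le_of_lt (aux_part_mem_le π hs) (lt_top_iff_ne_top.mpr hu)).ne
  have happ : (VSum A S V π) z =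
      ∑ s ∈ J, V s (A.amp (S.meas (Set.Ioc (π.pred s) s)) z) := by
    rw [VSum, ContinuousLinearMap.sum_apply]; rfl
  have hIocdisj : ∀ s ∈ J, ∀ t ∈ J, s ≠ t →
      Disjoint (Set.Ioc (π.pred s) s) (Set.Ioc (π.pred t) t) := by
    intro s hs t ht hst
    rcases lt_or_gt_of_ne hst with hlt | hlt
    · have h1 : s ≤ π.pred t := aux_pred_ge π (Finset.mem_of_mem_erase hs) hlt
      exact Set.disjoint_left.mpr fun r hr hr' => (hr.2.trans h1).not_gt hr'.1
    · have h1 : t ≤ π.pred s := aux_pred_ge π (Finset.mem_of_mem_erase ht) hlt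
      exact Set.disjoint_left.mpr fun r hr hr' => (hr'.2.trans h1).not_gt hr.1
  have hcross : ∀ s ∈ J, ∀ t ∈ J, s ≠ t →
      ⟪V s (A.amp (S.meas (Set.Ioc (π.pred s) s)) z),
        V t (A.amp (S.meas (Set.Ioc (π.pred t) t)) z)⟫ = 0 := by
    intro s hs t ht hst
    rcases lt_or_gt_of_ne hst with hlt | hlt
    · exact aux_cross A S pH Sig V Vhat hpsa hpc hSig hVp hhat hiso hcoc
        (hne s hs) (hne t ht) hlt (aux_pred_lt π hs).le le_rfl
        (aux_pred_ge π (Finset.mem_of_mem_erase hs) hlt) z z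
    · rw [← inner_conj_symm,
        aux_cross A S pH Sig V Vhat hpsa hpc hSig hVp hhat hiso hcoc
          (hne t ht) (hne s hs) hlt (aux_pred_lt π ht).le le_rfl
          (aux_pred_ge π (Finset.mem_of_mem_erase ht) hlt) z z, map_zero]
  have hsum1 : ‖(VSum A S V π) z‖ ^ 2 =
      ∑ s ∈ J, ‖V s (A.amp (S.meas (Set.Ioc (π.pred s) s)) z)‖ ^ 2 := by
    rw [happ]
    exact aux_norm_sum_sq J _ hcross
  have hle1 : ∑ s ∈ J, ‖V s (A.amp (S.meas (Set.Ioc (π.pred s) s)) z)‖ ^ 2 ≤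
      ∑ s ∈ J, ‖A.amp (S.meas (Set.Ioc (π.pred s) s)) z‖ ^ 2 := by
    refine Finset.sum_le_sum fun s hs => ?_
    have := auxV_contraction A pH V Vhat hpsa hpi hpc hVp hhat hiso (hne s hs)
      (A.amp (S.meas (Set.Ioc (π.pred s) s)) z)
    exact pow_le_pow_left₀ (norm_nonneg _) this 2
  have hbcross : ∀ s ∈ J, ∀ t ∈ J, s ≠ t →
      ⟪A.amp (S.meas (Set.Ioc (π.pred s) s)) z,
        A.amp (S.meas (Set.Ioc (π.pred t) t)) z⟫ = 0 := by
    intro s hs t ht hst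
    rw [← ContinuousLinearMap.adjoint_inner_right (A.amp (S.meas (Set.Ioc (π.pred s) s))),
      aux_amp_adjoint, aux_meas_adj, aux_amp_amp,
      aux_meas_disjoint S (hIocdisj s hs t ht hst) measurableSet_Ioc measurableSet_Ioc,
      aux_amp_zero]
    simp
  have hsum2 : ∑ s ∈ J, ‖A.amp (S.meas (Set.Ioc (π.pred s) s)) z‖ ^ 2 =
      ‖∑ s ∈ J, A.amp (S.meas (Set.Ioc (π.pred s) s)) z‖ ^ 2 :=
    (aux_norm_sum_sq J _ hbcross).symm
  have hT : ∑ s ∈ J, A.amp (S.meas (Set.Ioc (π.pred s) s)) z =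
      A.amp (∑ s ∈ J, S.meas (Set.Ioc (π.pred s) s)) z := by
    rw [aux_amp_sum, ContinuousLinearMap.sum_apply]
  have hTsa : ContinuousLinearMap.adjoint (∑ s ∈ J, S.meas (Set.Ioc (π.pred s) s)) =
      ∑ s ∈ J, S.meas (Set.Ioc (π.pred s) s) := by
    rw [map_sum]
    exact Finset.sum_congr rfl fun s _ => aux_meas_adj S _
  have hTidem : (∑ s ∈ J, S.meas (Set.Ioc (π.pred s) s)) ∘L
      (∑ s ∈ J, S.meas (Set.Ioc (π.pred s) s)) =
      ∑ s ∈ J, S.meas (Set.Ioc (π.pred s) s) := by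
    rw [← ContinuousLinearMap.mul_def, Finset.sum_mul_sum]
    refine Finset.sum_congr rfl fun s hs => ?_
    refine Finset.sum_eq_single_of_mem s hs ?_ |>.trans (S.idem _)
    intro t ht hts
    rw [ContinuousLinearMap.mul_def,
      aux_meas_disjoint S (hIocdisj s hs t ht (Ne.symm hts)) measurableSet_Ioc
        measurableSet_Ioc]
  have hle2 : ‖A.amp (∑ s ∈ J, S.meas (Set.Ioc (π.pred s) s)) z‖ ≤ ‖z‖ :=
    aux_amp_contraction A _ hTsa hTidem z
  have hfin : ‖(VSum A S V π) z‖ ^ 2 ≤ ‖z‖ ^ 2 := by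
    rw [hsum1]
    refine hle1.trans ?_
    rw [hsum2, hT]
    exact pow_le_pow_left₀ (norm_nonneg _) hle2 2
  have := Real.sqrt_le_sqrt hfin
  rwa [Real.sqrt_sq (norm_nonneg _), Real.sqrt_sq (norm_nonneg _)] at this

end Aux5

section Aux6

set_option linter.unusedSectionVars false
set_option maxHeartbeats 1000000

variable (A : AmpSpec 𝓕 h 𝓚) (S : QST E) (pH : H →L[ℂ] H)
variable (Sig : ℝ≥0∞ → (𝓚 →L[ℂ] 𝓚) → 𝓚 →L[ℂ] 𝓚) (V Vhat VSt : ℝ≥0∞ → 𝓚 →L[ℂ] 𝓚)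

/-- The trivial partition `{0, t}`. -/
def auxPartTriv (t : ℝ≥0∞) : TPartition t where
  pts := {0, t}
  zero_mem := by simp
  top_mem := by simp
  mem_le := by
    intro s hs
    rcases Finset.mem_insert.mp hs with h | h
    · simp [h]
    · rw [Finset.mem_singleton] at h; simp [h]

instance (t : ℝ≥0∞) : Nonempty (TPartition t) := ⟨auxPartTriv t⟩

/-- The common refinement of two partitions. -/
def auxPartSup {t : ℝ≥0∞} (π π' : TPartition t) : TPartition t where
  pts := π.pts ∪ π'.pts
  zero_mem := Finset.mem_union_left _ π.zero_mem
  top_mem := Finset.mem_union_left _ π.top_mem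
  mem_le := by
    intro s hs
    rcases Finset.mem_union.mp hs with h | h
    · exact π.mem_le s h
    · exact π'.mem_le s h

instance (t : ℝ≥0∞) : IsDirected (TPartition t) (· ≤ ·) :=
  ⟨fun π π' => ⟨auxPartSup π π',
    show π.pts ⊆ π.pts ∪ π'.pts from Finset.subset_union_left,
    show π'.pts ⊆ π.pts ∪ π'.pts from Finset.subset_union_right⟩⟩

instance (t : ℝ≥0∞) : (atTop : Filter (TPartition t)).NeBot :=
  Filter.atTop_neBot_iff.mpr ⟨inferInstance, inferInstance⟩

lemma aux_VSt_contraction (hpsa : ∀ f g : H, ⟪pH f, g⟫ = ⟪f, pH g⟫) (hpi : pH ∘L pH = pH)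
    (hpc : ∀ (u : ℝ≥0∞) (f : H), E.cut u (pH f) = pH (E.cut u f))
    (hSig : IsAmpCCRFlow E A Sig)
    (hVp : PAdapted E A pH V) (hhat : IsHatOf E A V Vhat) (hiso : IsometricHat Vhat)
    (hcoc : IsLeftCocycle Sig V Vhat)
    (hVSt : ∀ u : ℝ≥0∞, 0 < u → u ≠ ⊤ →
      ∀ z : 𝓚, Tendsto (fun π : TPartition u => VSum A S V π z) atTop (𝓝 (VSt u z)))
    {u : ℝ≥0∞} (hu0 : 0 < u) (hut : u ≠ ⊤) (z : 𝓚) : ‖VSt u z‖ ≤ ‖z‖ :=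
  le_of_tendsto (hVSt u hu0 hut z).norm
    (Filter.Eventually.of_forall fun π =>
      aux_vsum_bound A S pH Sig V Vhat hpsa hpi hpc hSig hVp hhat hiso hcoc hut π z)

/-- The restriction of a partition of `[0, u']` to `[0, u]`. -/
def auxPartRes {u u' : ℝ≥0∞} (huu' : u ≤ u') (π' : TPartition u') : TPartition u where
  pts := insert u (π'.pts.filter (· ≤ u))
  zero_mem := Finset.mem_insert_of_mem (Finset.mem_filter.mpr ⟨π'.zero_mem, zero_le⟩)
  top_mem := Finset.mem_insert_self u _
  mem_le := by
    intro s hs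
    rcases Finset.mem_insert.mp hs with hs | hs
    · exact le_of_eq hs
    · exact (Finset.mem_filter.mp hs).2

lemma auxPartRes_tendsto {u u' : ℝ≥0∞} (huu' : u ≤ u') :
    Tendsto (auxPartRes huu') atTop (atTop : Filter (TPartition u)) := by
  rw [Filter.tendsto_atTop]
  intro πb
  have hmem : ∀ s ∈ πb.pts, s ≤ u' := fun s hs => (πb.mem_le s hs).trans huu'
  refine Filter.eventually_atTop.mpr ⟨⟨insert u' πb.pts,
    Finset.mem_insert_of_mem πb.zero_mem, Finset.mem_insert_self u' _, ?_⟩, ?_⟩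
  · intro s hs
    rcases Finset.mem_insert.mp hs with hs | hs
    · exact le_of_eq hs
    · exact hmem s hs
  · intro π' hπ'
    intro x hx
    have hx1 : x ∈ π'.pts := hπ' (Finset.mem_insert_of_mem hx)
    exact Finset.mem_insert_of_mem (Finset.mem_filter.mpr ⟨hx1, πb.mem_le x hx⟩)

/-- The splitting of a Riemann sum over `[0, u']` at an interior partition point
`u`. -/
lemma aux_vsum_split {u u' : ℝ≥0∞} (huu' : u ≤ u') (hu' : u' ≠ ⊤)
    (π' : TPartition u') (hmem : u ∈ π'.pts) (z : 𝓚) :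
    VSum A S V π' z = VSum A S V (auxPartRes huu' π') z +
      VSum A S V π' (A.amp (S.meas (Set.Ioc u u')) z) := by
  classical
  set w := A.amp (S.meas (Set.Ioc u u')) z with hw
  have hpts : (auxPartRes huu' π').pts = π'.pts.filter (· ≤ u) :=
    Finset.insert_eq_self.mpr (Finset.mem_filter.mpr ⟨hmem, le_rfl⟩)
  have herase : (auxPartRes huu' π').pts.erase 0 =
      (π'.pts.erase 0).filter (· ≤ u) := by
    rw [hpts]
    ext x
    simp only [Finset.mem_erase, Finset.mem_filter]
    tauto
  have hpred : ∀ s : ℝ≥0∞, s ≤ u →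
      (auxPartRes huu' π').pred s = π'.pred s := by
    intro s hsu
    have hfil : (auxPartRes huu' π').pts.filter (fun r => r < s) =
        π'.pts.filter (fun r => r < s) := by
      rw [hpts]
      ext x
      simp only [Finset.mem_filter]
      constructor
      · rintro ⟨⟨h1, _⟩, h3⟩; exact ⟨h1, h3⟩
      · rintro ⟨h1, h2⟩; exact ⟨⟨h1, (h2.le.trans hsu)⟩, h2⟩
    show ((auxPartRes huu' π').pts.filter fun r => r < s).sup id =
      (π'.pts.filter fun r => r < s).sup id
    rw [hfil]
  -- term-by-term facts
  have hterm_hi : ∀ s ∈ π'.pts.erase 0, ¬ s ≤ u →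
      (V s ∘L A.amp (S.meas (Set.Ioc (π'.pred s) s))) z =
      (V s ∘L A.amp (S.meas (Set.Ioc (π'.pred s) s))) w := by
    intro s hs hsu
    have hus : u < s := not_le.mp hsu
    have hpge : u ≤ π'.pred s := aux_pred_ge π' hmem hus
    have hsub : Set.Ioc (π'.pred s) s ⊆ Set.Ioc u u' := fun r hr =>
      ⟨lt_of_le_of_lt hpge hr.1, hr.2.trans (aux_part_mem_le π' hs)⟩
    have : A.amp (S.meas (Set.Ioc (π'.pred s) s)) w =
        A.amp (S.meas (Set.Ioc (π'.pred s) s)) z := by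
      rw [hw, aux_amp_amp, aux_meas_inter S measurableSet_Ioc measurableSet_Ioc,
        Set.inter_eq_left.mpr hsub]
    simp only [ContinuousLinearMap.comp_apply]
    rw [this]
  have hterm_lo : ∀ s ∈ π'.pts.erase 0, s ≤ u →
      (V s ∘L A.amp (S.meas (Set.Ioc (π'.pred s) s))) w = 0 := by
    intro s hs hsu
    have hempty : Set.Ioc (π'.pred s) s ∩ Set.Ioc u u' = ∅ := by
      ext r
      simp only [Set.mem_inter_iff, Set.mem_Ioc, Set.mem_empty_iff_false, iff_false,
        not_and, and_imp]
      intro _ hrs hur _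
      exact absurd (hrs.trans hsu) (not_le.mpr hur)
    have : A.amp (S.meas (Set.Ioc (π'.pred s) s)) w = 0 := by
      rw [hw, aux_amp_amp, aux_meas_inter S measurableSet_Ioc measurableSet_Ioc, hempty,
        aux_meas_empty, aux_amp_zero]
      rfl
    simp only [ContinuousLinearMap.comp_apply] at this ⊢
    rw [this, map_zero]
  -- now split all three sums
  have e1 : VSum A S V π' z =
      ∑ s ∈ (π'.pts.erase 0).filter (· ≤ u),
        (V s ∘L A.amp (S.meas (Set.Ioc (π'.pred s) s))) z +
      ∑ s ∈ (π'.pts.erase 0).filter (¬ · ≤ u),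
        (V s ∘L A.amp (S.meas (Set.Ioc (π'.pred s) s))) z := by
    rw [VSum, ContinuousLinearMap.sum_apply,
      ← Finset.sum_filter_add_sum_filter_not (π'.pts.erase 0) (· ≤ u)]
  have e2 : VSum A S V (auxPartRes huu' π') z =
      ∑ s ∈ (π'.pts.erase 0).filter (· ≤ u),
        (V s ∘L A.amp (S.meas (Set.Ioc (π'.pred s) s))) z := by
    rw [VSum, ContinuousLinearMap.sum_apply, herase]
    refine Finset.sum_congr rfl fun s hs => ?_
    rw [hpred s (Finset.mem_filter.mp hs).2]
  have e3 : VSum A S V π' w =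
      ∑ s ∈ (π'.pts.erase 0).filter (¬ · ≤ u),
        (V s ∘L A.amp (S.meas (Set.Ioc (π'.pred s) s))) w := by
    rw [VSum, ContinuousLinearMap.sum_apply,
      ← Finset.sum_filter_add_sum_filter_not (π'.pts.erase 0) (· ≤ u)]
    rw [Finset.sum_eq_zero (fun s hs =>
      hterm_lo s (Finset.mem_filter.mp hs).1 (Finset.mem_filter.mp hs).2), zero_add]
  rw [e1, e2, e3]
  congr 1
  refine Finset.sum_congr rfl fun s hs => ?_
  exact hterm_hi s (Finset.mem_filter.mp hs).1 (Finset.mem_filter.mp hs).2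

/-- The restriction identity: `V_{S,u'} = V_{S,u} + V_{S,u'} (S((u,u']) ⊗ I)`. -/
lemma aux_VSt_restrict
    (hVSt : ∀ u : ℝ≥0∞, 0 < u → u ≠ ⊤ →
      ∀ z : 𝓚, Tendsto (fun π : TPartition u => VSum A S V π z) atTop (𝓝 (VSt u z)))
    {u u' : ℝ≥0∞} (hu0 : 0 < u) (huu' : u ≤ u') (hu' : u' ≠ ⊤) (z : 𝓚) :
    VSt u' z = VSt u z + VSt u' (A.amp (S.meas (Set.Ioc u u')) z) := by
  classical
  set w := A.amp (S.meas (Set.Ioc u u')) z with hw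
  have hu : u ≠ ⊤ := fun hc => hu' (top_le_iff.mp (hc ▸ huu'))
  have hu'0 : 0 < u' := lt_of_lt_of_le hu0 huu'
  have h2 : Tendsto (fun π' : TPartition u' => VSum A S V π' z) atTop (𝓝 (VSt u' z)) :=
    hVSt u' hu'0 hu' z
  have h3 : Tendsto (fun π' : TPartition u' => VSum A S V π' w) atTop (𝓝 (VSt u' w)) :=
    hVSt u' hu'0 hu' w
  have h1 : Tendsto (fun π' : TPartition u' =>
      VSum A S V (auxPartRes huu' π') z) atTop (𝓝 (VSt u z)) :=
    (hVSt u hu0 hu z).comp (auxPartRes_tendsto huu')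
  have h4 : Tendsto (fun π' : TPartition u' =>
      VSum A S V (auxPartRes huu' π') z + VSum A S V π' w) atTop
      (𝓝 (VSt u z + VSt u' w)) := h1.add h3
  have hev : ∀ᶠ π' : TPartition u' in atTop,
      VSum A S V π' z =
        VSum A S V (auxPartRes huu' π') z + VSum A S V π' w := by
    have hπ₀ : u ∈ ({0, u, u'} : Finset ℝ≥0∞) := by simp
    refine Filter.eventually_atTop.mpr ⟨⟨{0, u, u'}, by simp, by simp, ?_⟩, ?_⟩
    · intro s hs
      simp only [Finset.mem_insert, Finset.mem_singleton] at hs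
      rcases hs with rfl | rfl | rfl
      · exact zero_le
      · exact huu'
      · exact le_rfl
    · intro π' hπ'
      exact aux_vsum_split A S V huu' hu' π' (hπ' hπ₀) z
  exact tendsto_nhds_unique h2 (Filter.Tendsto.congr' (hev.mono fun π' hp => hp.symm) h4)

end Aux6

section Aux7

set_option linter.unusedSectionVars false
set_option maxHeartbeats 1000000

variable (A : AmpSpec 𝓕 h 𝓚) (S : QST E)

lemma aux_Ioi_eq (N : ℕ) :
    Set.Ioi ((N : ℝ≥0∞)) =
      {(⊤ : ℝ≥0∞)} ∪ ⋃ k : ℕ, Set.Ioc ((N + k : ℕ) : ℝ≥0∞) ((N + k + 1 : ℕ) : ℝ≥0∞) := by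
  classical
  ext s
  simp only [Set.mem_Ioi, Set.mem_union, Set.mem_singleton_iff, Set.mem_iUnion,
    Set.mem_Ioc]
  constructor
  · intro hs
    by_cases hstop : s = ⊤
    · exact Or.inl hstop
    · refine Or.inr ?_
      obtain ⟨M, hM⟩ := ENNReal.exists_nat_gt hstop
      have hex : ∃ k : ℕ, s ≤ ((N + k : ℕ) : ℝ≥0∞) :=
        ⟨M, hM.le.trans (Nat.cast_le.mpr (Nat.le_add_left M N))⟩
      let k₀ := Nat.find hex
      have hk₀ : s ≤ ((N + k₀ : ℕ) : ℝ≥0∞) := Nat.find_spec hex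
      have hk₀0 : k₀ ≠ 0 := by
        intro hc
        rw [hc] at hk₀
        simp only [Nat.add_zero] at hk₀
        exact absurd hk₀ (not_le.mpr hs)
      refine ⟨k₀ - 1, ?_, ?_⟩
      · have hmin : ¬ s ≤ ((N + (k₀ - 1) : ℕ) : ℝ≥0∞) :=
          Nat.find_min hex (by omega)
        exact not_le.mp hmin
      · have : N + (k₀ - 1) + 1 = N + k₀ := by omega
        rw [this]
        exact hk₀
  · rintro (rfl | ⟨k, hk1, _⟩)
    · exact ENNReal.natCast_lt_top N
    · exact lt_of_le_of_lt (Nat.cast_le.mpr (Nat.le_add_right N k)) hk1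

lemma aux_Ioc_nat_disjoint : Pairwise (Function.onFun Disjoint
    (fun j : ℕ => Set.Ioc ((j : ℝ≥0∞)) ((j + 1 : ℕ) : ℝ≥0∞))) := by
  intro i j hij
  rcases lt_or_gt_of_ne hij with hlt | hlt
  · refine Set.disjoint_left.mpr fun x hx hx' => ?_
    exact absurd (hx.2.trans (Nat.cast_le.mpr hlt)) (not_le.mpr hx'.1)
  · refine Set.disjoint_left.mpr fun x hx hx' => ?_
    exact absurd (hx'.2.trans (Nat.cast_le.mpr hlt)) (not_le.mpr hx.1)

/-- Tails of the complex measures `⟨x, S(·) y⟩` vanish for a finite stop time. -/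
lemma aux_cm_tail (hS : S.Finite) (x y : 𝓕) :
    Tendsto (fun N : ℕ => S.cm x y (Set.Ioi ((N : ℝ≥0∞)))) atTop (𝓝 0) := by
  classical
  set f : ℕ → ℂ := fun j => S.cm x y (Set.Ioc ((j : ℝ≥0∞)) ((j + 1 : ℕ) : ℝ≥0∞)) with hf
  have hmeas : ∀ j : ℕ, MeasurableSet (Set.Ioc ((j : ℝ≥0∞)) ((j + 1 : ℕ) : ℝ≥0∞)) :=
    fun j => measurableSet_Ioc
  have htop : S.cm x y {(⊤ : ℝ≥0∞)} = 0 := by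
    rw [S.cm_apply x y _ (measurableSet_singleton ⊤), hS]
    simp
  have key : ∀ N : ℕ, S.cm x y (Set.Ioi ((N : ℝ≥0∞))) = ∑' k : ℕ, f (k + N) := by
    intro N
    rw [aux_Ioi_eq]
    have hd : Disjoint ({(⊤ : ℝ≥0∞)})
        (⋃ k : ℕ, Set.Ioc ((N + k : ℕ) : ℝ≥0∞) ((N + k + 1 : ℕ) : ℝ≥0∞)) := by
      refine Set.disjoint_left.mpr fun r hr hr' => ?_
      rw [Set.mem_singleton_iff] at hr
      obtain ⟨k, hk⟩ := Set.mem_iUnion.mp hr'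
      rw [hr] at hk
      exact absurd hk.2 (not_le.mpr (ENNReal.natCast_lt_top _))
    rw [MeasureTheory.VectorMeasure.of_union hd (measurableSet_singleton _)
      (MeasurableSet.iUnion fun k => measurableSet_Ioc), htop, zero_add]
    rw [MeasureTheory.VectorMeasure.of_disjoint_iUnion
      (fun k => measurableSet_Ioc) ?_]
    · refine tsum_congr fun k => ?_
      have hnk : N + k = k + N := Nat.add_comm N k
      simp only [hf, hnk]
    · intro i j hij
      have := aux_Ioc_nat_disjoint (i := N + i) (j := N + j) (by omega)
      simpa [Function.onFun, Nat.cast_add] using this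
  have := tendsto_sum_nat_add f
  refine Tendsto.congr ?_ this
  intro N
  exact (key N).symm

lemma aux_amp_meas_contraction (A' : Set ℝ≥0∞) (hA : MeasurableSet A') (z : 𝓚) :
    ‖A.amp (S.meas A') z‖ ≤ ‖z‖ := by
  refine aux_amp_contraction A _ (aux_meas_adj S A') ?_ z
  rw [aux_meas_inter S hA hA, Set.inter_self]

lemma aux_amp_meas_normsq (A' : Set ℝ≥0∞) (hA : MeasurableSet A') (z : 𝓚) :
    (‖A.amp (S.meas A') z‖ : ℝ) ^ 2 = RCLike.re ⟪z, A.amp (S.meas A') z⟫ := by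
  have he : (ContinuousLinearMap.adjoint (A.amp (S.meas A'))) z = A.amp (S.meas A') z := by
    rw [aux_amp_adjoint, aux_meas_adj]
  have h1 : ⟪A.amp (S.meas A') z, A.amp (S.meas A') z⟫ = ⟪z, A.amp (S.meas A') z⟫ := by
    calc ⟪A.amp (S.meas A') z, A.amp (S.meas A') z⟫
        = ⟪(ContinuousLinearMap.adjoint (A.amp (S.meas A'))) z, A.amp (S.meas A') z⟫ := by
          rw [he]
      _ = ⟪z, A.amp (S.meas A') (A.amp (S.meas A') z)⟫ :=
          ContinuousLinearMap.adjoint_inner_left _ _ _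
      _ = ⟪z, A.amp (S.meas A') z⟫ := by
          rw [show A.amp (S.meas A') ((A.amp (S.meas A')) z) = A.amp (S.meas A') z by
            rw [aux_amp_amp, aux_meas_inter S hA hA, Set.inter_self]]
  rw [← inner_self_eq_norm_sq (𝕜 := ℂ), h1]

/-- The tail estimate: `‖(S((n,∞]) ⊗ I) z‖ → 0` as `n → ∞`, for a finite stop
time. -/
lemma aux_amp_tail (hS : S.Finite) (z : 𝓚) :
    Tendsto (fun N : ℕ => ‖A.amp (S.meas (Set.Ioi ((N : ℝ≥0∞)))) z‖) atTop (𝓝 0) := by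
  classical
  have hinner : Tendsto (fun N : ℕ => ⟪z, A.amp (S.meas (Set.Ioi ((N : ℝ≥0∞)))) z⟫)
      atTop (𝓝 0) := by
    rw [Metric.tendsto_atTop]
    intro ε hε
    set δ : ℝ := min 1 (ε / (2 * (2 * ‖z‖ + 1))) with hδdef
    have hδ0 : 0 < δ := lt_min one_pos (by positivity)
    have hδ1 : δ ≤ 1 := min_le_left _ _
    obtain ⟨ζ, hζmem, hζdist⟩ :=
      A.dense_tens.exists_dist_lt z hδ0
    obtain ⟨n, c, g, hg⟩ := Submodule.mem_span_set'.mp hζmem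
    -- write ζ as a finite sum of elementary tensors
    choose uu xx hux using fun i : Fin n => (g i).2
    have hζ : ζ = ∑ i : Fin n, A.tens (c i • uu i) (xx i) := by
      rw [← hg]
      refine Finset.sum_congr rfl fun i _ => ?_
      rw [show ((g i : 𝓚)) = A.tens (uu i) (xx i) from hux i,
        _root_.map_smul (A.tens) (c i) (uu i), LinearMap.smul_apply]
    have hζinner : ∀ N : ℕ, ⟪ζ, A.amp (S.meas (Set.Ioi ((N : ℝ≥0∞)))) ζ⟫ =
        ∑ i : Fin n, ∑ j : Fin n, ⟪c i • uu i, c j • uu j⟫ *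
          S.cm (xx i) (xx j) (Set.Ioi ((N : ℝ≥0∞))) := by
      intro N
      rw [hζ, map_sum, sum_inner]
      refine Finset.sum_congr rfl fun i _ => ?_
      rw [inner_sum]
      refine Finset.sum_congr rfl fun j _ => ?_
      rw [A.amp_tens, A.inner_tens, S.cm_apply _ _ _ measurableSet_Ioi]
    have hζ0 : Tendsto (fun N : ℕ => ⟪ζ, A.amp (S.meas (Set.Ioi ((N : ℝ≥0∞)))) ζ⟫)
        atTop (𝓝 0) := by
      have : Tendsto (fun N : ℕ => ∑ i : Fin n, ∑ j : Fin n, ⟪c i • uu i, c j • uu j⟫ *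
          S.cm (xx i) (xx j) (Set.Ioi ((N : ℝ≥0∞)))) atTop (𝓝 0) := by
        have hzero : (0 : ℂ) = ∑ _i : Fin n, ∑ _j : Fin n, (0 : ℂ) := by simp
        rw [hzero]
        refine tendsto_finset_sum _ fun i _ => ?_
        refine tendsto_finset_sum _ fun j _ => ?_
        have := (aux_cm_tail S hS (xx i) (xx j)).const_mul (⟪c i • uu i, c j • uu j⟫)
        simpa using this
      exact Tendsto.congr (fun N => (hζinner N).symm) this
    have hδz : ‖z - ζ‖ < δ := by
      rw [← dist_eq_norm]
      exact hζdist
    have hdiff : ∀ N : ℕ, ‖⟪z, A.amp (S.meas (Set.Ioi ((N : ℝ≥0∞)))) z⟫ -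
        ⟪ζ, A.amp (S.meas (Set.Ioi ((N : ℝ≥0∞)))) ζ⟫‖ ≤ δ * (2 * ‖z‖ + 1) := by
      intro N
      set T := A.amp (S.meas (Set.Ioi ((N : ℝ≥0∞)))) with hT
      have hsplit : ⟪z, T z⟫ - ⟪ζ, T ζ⟫ = ⟪z - ζ, T z⟫ + ⟪ζ, T (z - ζ)⟫ := by
        rw [inner_sub_left, map_sub, inner_sub_right]
        ring
      have hTz : ‖T z‖ ≤ ‖z‖ := aux_amp_meas_contraction A S _ measurableSet_Ioi z
      have hTzζ : ‖T (z - ζ)‖ ≤ ‖z - ζ‖ :=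
        aux_amp_meas_contraction A S _ measurableSet_Ioi _
      have hζnorm : ‖ζ‖ ≤ ‖z‖ + 1 := by
        have h2 : ‖ζ‖ - ‖z‖ ≤ ‖ζ - z‖ := norm_sub_norm_le ζ z
        have h3 : ‖ζ - z‖ = ‖z - ζ‖ := norm_sub_rev ζ z
        have h4 := hδz.le.trans hδ1
        linarith
      calc ‖⟪z, T z⟫ - ⟪ζ, T ζ⟫‖ = ‖⟪z - ζ, T z⟫ + ⟪ζ, T (z - ζ)⟫‖ := by rw [hsplit]
        _ ≤ ‖⟪z - ζ, T z⟫‖ + ‖⟪ζ, T (z - ζ)⟫‖ := norm_add_le _ _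
        _ ≤ ‖z - ζ‖ * ‖T z‖ + ‖ζ‖ * ‖T (z - ζ)‖ := by
            gcongr <;> exact norm_inner_le_norm _ _
        _ ≤ δ * ‖z‖ + (‖z‖ + 1) * δ := by
            have h1 : ‖z - ζ‖ * ‖T z‖ ≤ δ * ‖z‖ := by
              have := mul_le_mul hδz.le hTz (norm_nonneg _) hδ0.le
              linarith [this]
            have h2 : ‖ζ‖ * ‖T (z - ζ)‖ ≤ (‖z‖ + 1) * δ := by
              have h3 : ‖T (z - ζ)‖ ≤ δ := hTzζ.trans hδz.le
              have := mul_le_mul hζnorm h3 (norm_nonneg _)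
                (by positivity : (0:ℝ) ≤ ‖z‖ + 1)
              linarith [this]
            linarith
        _ = δ * (2 * ‖z‖ + 1) := by ring
    have hδε : δ * (2 * ‖z‖ + 1) ≤ ε / 2 := by
      have h1 : δ ≤ ε / (2 * (2 * ‖z‖ + 1)) := min_le_right _ _
      have h2 : (0:ℝ) < 2 * ‖z‖ + 1 := by positivity
      calc δ * (2 * ‖z‖ + 1) ≤ ε / (2 * (2 * ‖z‖ + 1)) * (2 * ‖z‖ + 1) := by
            exact mul_le_mul_of_nonneg_right h1 h2.le
        _ = ε / 2 := by field_simp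
    obtain ⟨N₀, hN₀⟩ := Metric.tendsto_atTop.mp hζ0 (ε / 2) (by positivity)
    refine ⟨N₀, fun N hN => ?_⟩
    rw [dist_zero_right]
    have h1 := hdiff N
    have h2 := hN₀ N hN
    rw [dist_zero_right] at h2
    calc ‖⟪z, A.amp (S.meas (Set.Ioi ((N : ℝ≥0∞)))) z⟫‖ ≤
        ‖⟪z, A.amp (S.meas (Set.Ioi ((N : ℝ≥0∞)))) z⟫ -
          ⟪ζ, A.amp (S.meas (Set.Ioi ((N : ℝ≥0∞)))) ζ⟫‖ +
          ‖⟪ζ, A.amp (S.meas (Set.Ioi ((N : ℝ≥0∞)))) ζ⟫‖ := by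
          have := norm_add_le (⟪z, A.amp (S.meas (Set.Ioi ((N : ℝ≥0∞)))) z⟫ -
            ⟪ζ, A.amp (S.meas (Set.Ioi ((N : ℝ≥0∞)))) ζ⟫)
            (⟪ζ, A.amp (S.meas (Set.Ioi ((N : ℝ≥0∞)))) ζ⟫)
          simpa using this
      _ < ε / 2 + ε / 2 := by
          refine add_lt_add_of_le_of_lt (h1.trans hδε) h2
      _ = ε := by ring
  -- now deduce the norm statement
  have hbound : ∀ N : ℕ, ‖A.amp (S.meas (Set.Ioi ((N : ℝ≥0∞)))) z‖ ≤
      Real.sqrt ‖⟪z, A.amp (S.meas (Set.Ioi ((N : ℝ≥0∞)))) z⟫‖ := by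
    intro N
    have h1 := aux_amp_meas_normsq A S (Set.Ioi ((N : ℝ≥0∞))) measurableSet_Ioi z
    have h2 : (‖A.amp (S.meas (Set.Ioi ((N : ℝ≥0∞)))) z‖ : ℝ) ^ 2 ≤
        ‖⟪z, A.amp (S.meas (Set.Ioi ((N : ℝ≥0∞)))) z⟫‖ := by
      rw [h1]
      exact RCLike.re_le_norm _
    have := Real.sqrt_le_sqrt h2
    rwa [Real.sqrt_sq (norm_nonneg _)] at this
  have hsq : Tendsto (fun N : ℕ =>
      Real.sqrt ‖⟪z, A.amp (S.meas (Set.Ioi ((N : ℝ≥0∞)))) z⟫‖) atTop (𝓝 0) := by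
    have hn : Tendsto (fun N : ℕ => ‖⟪z, A.amp (S.meas (Set.Ioi ((N : ℝ≥0∞)))) z⟫‖)
        atTop (𝓝 0) := by
      simpa using hinner.norm
    have hcomp := (Real.continuous_sqrt.tendsto 0).comp hn
    rw [Real.sqrt_zero] at hcomp
    exact hcomp
  exact squeeze_zero (fun N => norm_nonneg _) hbound hsq

end Aux7

/-- Corollary: for a strongly continuous isometric `p`-adapted
cocycle `V`, the strong limit `V_S = V_{S,∞} = lim_{t→∞} V_{S,t}` exists. -/
theorem stopped_cocycle_at_infinity_exists
    (E : FockSpec H 𝓕) (A : AmpSpec 𝓕 h 𝓚) (S : QST E) (hS : S.Finite)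
    (M : Set (h →L[ℂ] h)) (pH : H →L[ℂ] H)
    (hpsa : ∀ f g : H, ⟪pH f, g⟫ = ⟪f, pH g⟫) (hpi : pH ∘L pH = pH)
    (hpc : ∀ (u : ℝ≥0∞) (f : H), E.cut u (pH f) = pH (E.cut u f))
    (Sig : ℝ≥0∞ → (𝓚 →L[ℂ] 𝓚) → 𝓚 →L[ℂ] 𝓚) (hSig : IsAmpCCRFlow E A Sig)
    (V Vhat : ℝ≥0∞ → 𝓚 →L[ℂ] 𝓚)
    (hVM : ∀ u : ℝ≥0∞, InVNTensor A M (V u))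
    (hVp : PAdapted E A pH V) (hhat : IsHatOf E A V Vhat)
    (hiso : IsometricHat Vhat) (hcoc : IsLeftCocycle Sig V Vhat)
    (hcont : StrongContOn V)
    (VSt : ℝ≥0∞ → 𝓚 →L[ℂ] 𝓚)
    (hVSt : ∀ u : ℝ≥0∞, 0 < u → u ≠ ⊤ →
      ∀ z : 𝓚, Tendsto (fun π : TPartition u => VSum A S V π z) atTop (𝓝 (VSt u z))) :
    ∃ VS : 𝓚 →L[ℂ] 𝓚,
      ∀ z : 𝓚, Tendsto (fun u => VSt u z) (𝓝[Set.Iio (⊤ : ℝ≥0∞)] ⊤) (𝓝 (VS z)) := by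
  classical
  -- the approach filter is nontrivial
  have hcoeT : Tendsto (fun n : ℕ => (n : ℝ≥0∞)) atTop (𝓝[Set.Iio (⊤ : ℝ≥0∞)] ⊤) := by
    rw [tendsto_nhdsWithin_iff]
    exact ⟨ENNReal.tendsto_nat_nhds_top,
      Filter.Eventually.of_forall fun n => ENNReal.natCast_lt_top n⟩
  haveI hNB : (𝓝[Set.Iio (⊤ : ℝ≥0∞)] (⊤ : ℝ≥0∞)).NeBot :=
    Filter.neBot_of_le hcoeT
  -- membership of `Ioo N ⊤` in the filter
  have hIoo : ∀ N : ℕ, Set.Ioo ((N : ℝ≥0∞)) ⊤ ∈ 𝓝[Set.Iio (⊤ : ℝ≥0∞)] (⊤ : ℝ≥0∞) := by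
    intro N
    rw [← Set.Ioi_inter_Iio]
    exact Filter.inter_mem
      (mem_nhdsWithin_of_mem_nhds (isOpen_Ioi.mem_nhds (ENNReal.natCast_lt_top N)))
      self_mem_nhdsWithin
  -- uniform tail bound for differences
  have hdiff : ∀ (z : 𝓚) (N : ℕ) (u u' : ℝ≥0∞), (N : ℝ≥0∞) < u → u ≤ u' → u' ≠ ⊤ →
      ‖VSt u' z - VSt u z‖ ≤ ‖A.amp (S.meas (Set.Ioi ((N : ℝ≥0∞)))) z‖ := by
    intro z N u u' hNu huu' hu'
    have hu0 : 0 < u := lt_of_le_of_lt zero_le hNu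
    have hu'0 : 0 < u' := lt_of_lt_of_le hu0 huu'
    have hrestrict := aux_VSt_restrict A S V VSt hVSt hu0 huu' hu' z
    have hsub : VSt u' z - VSt u z = VSt u' (A.amp (S.meas (Set.Ioc u u')) z) := by
      rw [hrestrict]; abel
    rw [hsub]
    have h1 : ‖VSt u' (A.amp (S.meas (Set.Ioc u u')) z)‖ ≤
        ‖A.amp (S.meas (Set.Ioc u u')) z‖ :=
      aux_VSt_contraction A S pH Sig V Vhat VSt hpsa hpi hpc hSig hVp hhat hiso hcoc
        hVSt hu'0 hu' _
    refine h1.trans ?_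
    have hinter : Set.Ioc u u' ∩ Set.Ioi ((N : ℝ≥0∞)) = Set.Ioc u u' :=
      Set.inter_eq_left.mpr fun r hr => lt_trans hNu hr.1
    have h2 : A.amp (S.meas (Set.Ioc u u')) z =
        A.amp (S.meas (Set.Ioc u u')) (A.amp (S.meas (Set.Ioi ((N : ℝ≥0∞)))) z) := by
      rw [aux_amp_amp, aux_meas_inter S measurableSet_Ioc measurableSet_Ioi, hinter]
    rw [h2]
    exact aux_amp_meas_contraction A S _ measurableSet_Ioc _
  -- pointwise limits exist
  have hlim : ∀ z : 𝓚, ∃ Lz : 𝓚,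
      Tendsto (fun u => VSt u z) (𝓝[Set.Iio (⊤ : ℝ≥0∞)] ⊤) (𝓝 Lz) := by
    intro z
    have hcauchy : Cauchy (Filter.map (fun u => VSt u z)
        (𝓝[Set.Iio (⊤ : ℝ≥0∞)] (⊤ : ℝ≥0∞))) := by
      rw [Metric.cauchy_iff]
      refine ⟨hNB.map _, fun ε hε => ?_⟩
      obtain ⟨N, hN⟩ := Metric.tendsto_atTop.mp (aux_amp_tail A S hS z) ε hε
      have hNtail : ‖A.amp (S.meas (Set.Ioi ((N : ℝ≥0∞)))) z‖ < ε := by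
        have := hN N le_rfl
        rw [dist_zero_right] at this
        simpa using this
      refine ⟨(fun u => VSt u z) '' Set.Ioo ((N : ℝ≥0∞)) ⊤, ?_, ?_⟩
      · rw [Filter.mem_map]
        exact Filter.mem_of_superset (hIoo N) fun u hu => Set.mem_image_of_mem _ hu
      · rintro x ⟨u, hu, rfl⟩ y ⟨u', hu', rfl⟩
        rcases le_total u u' with huu' | huu'
        · rw [dist_eq_norm, norm_sub_rev]
          exact lt_of_le_of_lt (hdiff z N u u' hu.1 huu' hu'.2.ne) hNtail
        · rw [dist_eq_norm]
          exact lt_of_le_of_lt (hdiff z N u' u hu'.1 huu' hu.2.ne) hNtail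
    obtain ⟨Lz, hLz⟩ := CompleteSpace.complete hcauchy
    exact ⟨Lz, hLz⟩
  choose L hL using hlim
  have hadd : ∀ z z', L (z + z') = L z + L z' := by
    intro z z'
    refine tendsto_nhds_unique (hL (z + z')) ?_
    have := (hL z).add (hL z')
    refine Tendsto.congr (fun u => ?_) this
    rw [← (VSt u).map_add]
  have hsmul : ∀ (c : ℂ) (z : 𝓚), L (c • z) = c • L z := by
    intro c z
    refine tendsto_nhds_unique (hL (c • z)) ?_
    have := (hL z).const_smul c
    refine Tendsto.congr (fun u => ?_) this
    rw [← (VSt u).map_smul]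
  have hbound : ∀ z, ‖L z‖ ≤ 1 * ‖z‖ := by
    intro z
    rw [one_mul]
    refine le_of_tendsto (hL z).norm ?_
    filter_upwards [hIoo 0] with u hu
    have hu0 : (0 : ℝ≥0∞) < u := by
      have := hu.1
      simpa using this
    exact aux_VSt_contraction A S pH Sig V Vhat VSt hpsa hpi hpc hSig hVp hhat hiso hcoc
      hVSt hu0 hu.2.ne z
  let Llin : 𝓚 →ₗ[ℂ] 𝓚 :=
    { toFun := L
      map_add' := hadd
      map_smul' := hsmul }
  exact ⟨LinearMap.mkContinuous Llin 1 hbound, fun z => hL z⟩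

end
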